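/- arXiv:1504.00085 — 7 statements merged into one kernel-verified Lean document; each statement's English description precedes it below -/
import Mathlib

section
/- If there exist n equiangular lines in C^d (or R^d) with common angle α, i.e., unit vectors x_1,...,x_n spanning distinct lines with |⟨x_i,x_j⟩| = α for all i ≠ j, then α² ≥ (n−d)/((n−1)d). -/
lemma sum_quad_comm {M : Type*} [AddCommMonoid M] {a b c e : ℕ}
    (f : Fin a → Fin b → Fin c → Fin e → M) :
    ∑ k, ∑ l, ∑ i, ∑ j, f k l i j = ∑ i, ∑ j, ∑ k, ∑ l, f k l i j := by
  rw [show (∑ k, ∑ l, ∑ i, ∑ j, f k l i j) = ∑ k, ∑ i, ∑ l, ∑ j, f k l i j from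
    Finset.sum_congr rfl fun k _ => Finset.sum_comm]
  rw [Finset.sum_comm]
  refine Finset.sum_congr rfl fun i _ => ?_
  rw [show (∑ k, ∑ l, ∑ j, f k l i j) = ∑ k, ∑ j, ∑ l, f k l i j from
    Finset.sum_congr rfl fun k _ => Finset.sum_comm]
  exact Finset.sum_comm

/-- **Relative (Welch) bound.** If there exist `n` equiangular lines in `𝕜^d`
(`𝕜 = ℝ` or `ℂ`), i.e. unit vectors spanning pairwise distinct lines whose pairwise
inner products all have absolute value `α`, then `α² ≥ (n - d)/((n-1)d)`. -/
theorem relative_bound {𝕜 : Type*} [RCLike 𝕜] (n d : ℕ) (hn : 0 < n) (hd : 0 < d)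
    (α : ℝ) (hα : 0 ≤ α)
    (x : Fin n → EuclideanSpace 𝕜 (Fin d))
    (hunit : ∀ i, ‖x i‖ = 1)
    (hdistinct : ∀ i j, i ≠ j → ∀ c : 𝕜, x i ≠ c • x j)
    (hangle : ∀ i j, i ≠ j → ‖(inner 𝕜 (x i) (x j) : 𝕜)‖ = α) :
    ((n : ℝ) - d) / (((n : ℝ) - 1) * d) ≤ α ^ 2 := by
  classical
  set S : Fin d → Fin d → 𝕜 := fun k l => ∑ i, (starRingEnd 𝕜) (x i k) * x i l with hS
  set c : Fin n → Fin n → 𝕜 := fun i j => ∑ k, (starRingEnd 𝕜) (x i k) * x j k with hc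
  have hcinner : ∀ i j, (inner 𝕜 (x i) (x j) : 𝕜) = c i j := fun i j => by
    simp only [hc, PiLp.inner_apply, RCLike.inner_apply]
    exact Finset.sum_congr rfl fun k _ => by ring
  -- coordinates norms
  have hcoord : ∀ i, ∑ k, ‖x i k‖ ^ 2 = 1 := by
    intro i
    have := EuclideanSpace.norm_eq (x i)
    rw [hunit i] at this
    have h2 : Real.sqrt (∑ k, ‖x i k‖ ^ 2) = 1 := this.symm
    nlinarith [Real.sq_sqrt (show (0:ℝ) ≤ ∑ k, ‖x i k‖ ^ 2 by positivity),
      Real.sqrt_nonneg (∑ k, ‖x i k‖ ^ 2)]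
  set t : Fin d → ℝ := fun k => ∑ i, ‖x i k‖ ^ 2 with ht
  have htsum : ∑ k, t k = n := by
    rw [ht, Finset.sum_comm]
    simp [hcoord]
  -- diagonal of S
  have hSdiag : ∀ k, S k k = ((t k : ℝ) : 𝕜) := by
    intro k
    simp only [hS, ht]
    push_cast
    exact Finset.sum_congr rfl fun i _ => by rw [RCLike.conj_mul]
  -- key identity: ∑∑ ‖S k l‖² = ∑∑ ‖c i j‖²
  have hkey𝕜 : ∑ k, ∑ l, ((‖S k l‖ ^ 2 : ℝ) : 𝕜) = ∑ i, ∑ j, ((‖c i j‖ ^ 2 : ℝ) : 𝕜) := by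
    have hconjS : ∀ k l, (starRingEnd 𝕜) (S k l) = ∑ j, (starRingEnd 𝕜) (x j l) * x j k := by
      intro k l
      simp only [hS]
      rw [map_sum]
      exact Finset.sum_congr rfl fun j _ => by rw [map_mul, RCLike.conj_conj, mul_comm]
    have hconjc : ∀ i j, (starRingEnd 𝕜) (c i j) = ∑ l, x i l * (starRingEnd 𝕜) (x j l) := by
      intro i j
      simp only [hc]
      rw [map_sum]
      exact Finset.sum_congr rfl fun l _ => by rw [map_mul, RCLike.conj_conj, mul_comm]
    calc ∑ k, ∑ l, ((‖S k l‖ ^ 2 : ℝ) : 𝕜)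
        = ∑ k, ∑ l, S k l * (starRingEnd 𝕜) (S k l) := by
          refine Finset.sum_congr rfl fun k _ => Finset.sum_congr rfl fun l _ => ?_
          rw [RCLike.mul_conj]; norm_cast
      _ = ∑ k : Fin d, ∑ l : Fin d,
            ((∑ i, (starRingEnd 𝕜) (x i k) * x i l) * (∑ j, (starRingEnd 𝕜) (x j l) * x j k)) := by
          refine Finset.sum_congr rfl fun k _ => Finset.sum_congr rfl fun l _ => ?_
          rw [hconjS]
      _ = ∑ i : Fin n, ∑ j : Fin n,
            ((∑ k, (starRingEnd 𝕜) (x i k) * x j k) * (∑ l, x i l * (starRingEnd 𝕜) (x j l))) := by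
          simp only [Finset.sum_mul_sum, Finset.mul_sum, Finset.sum_mul]
          rw [sum_quad_comm (fun k l a b =>
            (starRingEnd 𝕜) (x b k) * x b l * ((starRingEnd 𝕜) (x a l) * x a k))]
          refine Finset.sum_congr rfl fun i _ => Finset.sum_congr rfl fun j _ =>
            Finset.sum_congr rfl fun k _ => Finset.sum_congr rfl fun l _ => by ring
      _ = ∑ i, ∑ j, c i j * (starRingEnd 𝕜) (c i j) := by
          refine Finset.sum_congr rfl fun i _ => Finset.sum_congr rfl fun j _ => ?_
          rw [hconjc]
      _ = ∑ i, ∑ j, ((‖c i j‖ ^ 2 : ℝ) : 𝕜) := by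
          refine Finset.sum_congr rfl fun i _ => Finset.sum_congr rfl fun j _ => ?_
          rw [RCLike.mul_conj]; norm_cast
  have hkey : ∑ k, ∑ l, ‖S k l‖ ^ 2 = ∑ i, ∑ j, ‖c i j‖ ^ 2 := by
    have := hkey𝕜
    push_cast at this
    exact_mod_cast this
  -- Cauchy–Schwarz
  have hCS : ((n : ℝ)) ^ 2 ≤ (d : ℝ) * ∑ k, (t k) ^ 2 := by
    have := sq_sum_le_card_mul_sum_sq (s := (Finset.univ : Finset (Fin d))) (f := t)
    simpa [htsum] using this
  -- diagonal bound
  have hdiagle : ∀ k, (t k) ^ 2 ≤ ∑ l, ‖S k l‖ ^ 2 := by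
    intro k
    have h1 : (t k) ^ 2 = ‖S k k‖ ^ 2 := by
      rw [hSdiag k, RCLike.norm_ofReal, abs_of_nonneg (by positivity)]
    rw [h1]
    exact Finset.single_le_sum (f := fun l => ‖S k l‖ ^ 2) (fun l _ => by positivity)
      (Finset.mem_univ k)
  -- compute the RHS sum
  have hcsum : ∑ i, ∑ j, ‖c i j‖ ^ 2 = n + (n * (n - 1)) * α ^ 2 := by
    have hterm : ∀ i, ∑ j, ‖c i j‖ ^ 2 = 1 + (n - 1) * α ^ 2 := by
      intro i
      rw [← Finset.add_sum_erase _ _ (Finset.mem_univ i)]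
      have hcii : ‖c i i‖ = 1 := by
        rw [← hcinner, inner_self_eq_norm_sq_to_K, hunit]
        simp
      rw [hcii]
      have : ∑ j ∈ Finset.univ.erase i, ‖c i j‖ ^ 2
          = ∑ j ∈ Finset.univ.erase i, α ^ 2 := by
        refine Finset.sum_congr rfl fun j hj => ?_
        rw [← hcinner, hangle i j (Ne.symm (Finset.ne_of_mem_erase hj))]
      rw [this, Finset.sum_const, Finset.card_erase_of_mem (Finset.mem_univ i),
        Finset.card_univ, Fintype.card_fin, nsmul_eq_mul]
      push_cast [Nat.cast_sub hn]
      ring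
    rw [Finset.sum_congr rfl fun i _ => hterm i, Finset.sum_const, Finset.card_univ,
      Fintype.card_fin, nsmul_eq_mul]
    ring
  -- combine
  have hmain : ((n : ℝ)) ^ 2 ≤ (d : ℝ) * (n + (n * (n - 1)) * α ^ 2) := by
    calc ((n : ℝ)) ^ 2 ≤ (d : ℝ) * ∑ k, (t k) ^ 2 := hCS
      _ ≤ (d : ℝ) * ∑ k, ∑ l, ‖S k l‖ ^ 2 := by
          refine mul_le_mul_of_nonneg_left (Finset.sum_le_sum fun k _ => hdiagle k)
            (by positivity)
      _ = (d : ℝ) * (n + (n * (n - 1)) * α ^ 2) := by rw [hkey, hcsum]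
  rcases Nat.lt_or_ge n 2 with h2 | h2
  · have hn1 : (n:ℝ) = 1 := by
      have : n = 1 := by omega
      simp [this]
    rw [hn1]
    norm_num
    positivity
  · have hn2 : (2:ℝ) ≤ (n:ℝ) := by exact_mod_cast h2
    have hdR : (0:ℝ) < d := by exact_mod_cast hd
    have hden : (0:ℝ) < ((n:ℝ) - 1) * d := by nlinarith
    rw [div_le_iff₀ hden]
    have hnR : (0:ℝ) < n := by exact_mod_cast hn
    nlinarith [hmain, sq_nonneg α, mul_pos hnR hdR]
end

section
/- If there exist n equiangular lines in C^d, then n ≤ d². -/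
/-- **Absolute (Gerzon) bound, complex case.** If there exist `n` equiangular
lines in `ℂ^d`, then `n ≤ d²`. -/
theorem absolute_bound_complex (n d : ℕ) (hd : 0 < d)
    (α : ℝ) (hα0 : 0 ≤ α) (hα1 : α < 1)
    (x : Fin n → EuclideanSpace ℂ (Fin d))
    (hunit : ∀ i, ‖x i‖ = 1)
    (hangle : ∀ i j, i ≠ j → ‖(inner ℂ (x i) (x j) : ℂ)‖ = α) :
    n ≤ d ^ 2 := by
  classical
  set E : Fin n → Fin n → ℂ := fun i j => (inner ℂ (x i) (x j) : ℂ) with hEdef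
  have hE1 : ∀ i, E i i = 1 := by
    intro i
    simp only [hEdef]
    rw [inner_self_eq_norm_sq_to_K, hunit]
    norm_num
  have hEα : ∀ i j, i ≠ j → E j i * E i j = ((α : ℂ))^2 := by
    intro i j h
    have h1 : E j i = (starRingEnd ℂ) (E i j) := by
      simp only [hEdef]
      rw [← inner_conj_symm]
    rw [h1, RCLike.conj_mul, hangle i j h]
    norm_num
  -- the outer-product matrices
  set T : Fin n → Matrix (Fin d) (Fin d) ℂ :=
    fun i => Matrix.of fun a b => x i a * (starRingEnd ℂ) (x i b) with hTdef
  have hli : LinearIndependent ℂ T := by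
    rw [Fintype.linearIndependent_iff]
    intro g hsum j
    have hab : ∀ a b : Fin d, ∑ i, g i * (x i a * (starRingEnd ℂ) (x i b)) = 0 := by
      intro a b
      have := congrFun (congrFun hsum a) b
      simpa [hTdef, Matrix.sum_apply] using this
    -- key equation: ∑ i, g i * (E j i * E i j) = 0
    have key : ∀ j, ∑ i, g i * (E j i * E i j) = 0 := by
      intro j
      have expand : ∀ i, g i * (E j i * E i j)
          = ∑ a, ∑ b, ((starRingEnd ℂ) (x j a) * x j b)
              * (g i * (x i a * (starRingEnd ℂ) (x i b))) := by
        intro i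
        simp only [hEdef, PiLp.inner_apply, RCLike.inner_apply]
        rw [Finset.sum_mul_sum, Finset.mul_sum]
        refine Finset.sum_congr rfl fun a _ => ?_
        rw [Finset.mul_sum]
        refine Finset.sum_congr rfl fun b _ => ?_
        ring
      calc ∑ i, g i * (E j i * E i j)
          = ∑ a, ∑ b, ((starRingEnd ℂ) (x j a) * x j b)
              * (∑ i, g i * (x i a * (starRingEnd ℂ) (x i b))) := by
            simp only [expand, Finset.mul_sum]
            rw [Finset.sum_comm]
            refine Finset.sum_congr rfl fun a _ => ?_
            rw [Finset.sum_comm]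
        _ = 0 := by simp [hab]
    -- rewrite key j using hE1, hEα
    have keyj : ∀ j, g j * (1 - (α:ℂ)^2) + (α:ℂ)^2 * (∑ i, g i) = 0 := by
      intro j
      have := key j
      rw [Finset.sum_eq_add_sum_sdiff_singleton_of_mem (Finset.mem_univ j)] at this
      rw [hE1 j, mul_one] at this
      have h2 : ∑ i ∈ Finset.univ \ {j}, g i * (E j i * E i j)
          = ∑ i ∈ Finset.univ \ {j}, g i * (α:ℂ)^2 := by
        refine Finset.sum_congr rfl fun i hi => ?_
        have : i ≠ j := by simpa using (Finset.mem_sdiff.mp hi).2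
        rw [hEα i j this]
      rw [h2, ← Finset.sum_mul] at this
      have h3 : ∑ i ∈ Finset.univ \ {j}, g i = (∑ i, g i) - g j := by
        rw [Finset.sum_eq_add_sum_sdiff_singleton_of_mem (Finset.mem_univ j) g]
        ring
      rw [h3] at this
      linear_combination this
    -- sum over j
    have hS : (∑ i, g i) = 0 := by
      have := Finset.sum_congr rfl (fun j (_ : j ∈ Finset.univ) => keyj j)
      rw [Finset.sum_const_zero] at this
      rw [Finset.sum_add_distrib, ← Finset.sum_mul, Finset.sum_const, Finset.card_univ,
        Fintype.card_fin] at this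
      have hcoef : (1 - (α:ℂ)^2) + (n:ℂ) * (α:ℂ)^2 ≠ 0 := by
        have hpos : (1 - (α:ℝ)^2) + (n:ℝ) * α^2 > 0 := by
          have h1 : α^2 < 1 := by nlinarith
          have h2 : (0:ℝ) ≤ (n:ℝ) := Nat.cast_nonneg n
          nlinarith [sq_nonneg α]
        intro hc
        have : ((1 - (α:ℝ)^2) + (n:ℝ) * α^2 : ℂ) = 0 := by push_cast; push_cast at hc; linear_combination hc
        rw [show ((1 - (α:ℝ)^2) + (n:ℝ) * α^2 : ℂ) = (((1 - α^2) + (n:ℝ) * α^2 : ℝ) : ℂ) by push_cast; ring] at this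
        exact absurd (Complex.ofReal_eq_zero.mp this) (ne_of_gt hpos)
      simp only [nsmul_eq_mul] at this
      have h4 : (∑ i, g i) * ((1 - (α:ℂ)^2) + (n:ℂ) * (α:ℂ)^2) = 0 := by
        linear_combination this
      exact (mul_eq_zero.mp h4).resolve_right hcoef
    have hne : (1 - (α:ℂ)^2) ≠ 0 := by
      intro h
      have h1 : (((1 - α^2 : ℝ)) : ℂ) = 0 := by push_cast; linear_combination h
      have h2 : (1 - α^2 : ℝ) = 0 := Complex.ofReal_eq_zero.mp h1
      nlinarith
    have := keyj j
    rw [hS, mul_zero, add_zero] at this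
    exact (mul_eq_zero.mp this).resolve_right hne
  have hcard := hli.fintype_card_le_finrank
  rw [Fintype.card_fin, Module.finrank_matrix] at hcard
  simpa [Fintype.card_fin, Module.finrank_self, sq] using hcard
end

section
/- If there exist n equiangular lines in R^d, then n ≤ d(d+1)/2. -/
open Finset

/-- **Absolute (Gerzon) bound, real case.** If there exist `n` equiangular
lines in `ℝ^d`, then `n ≤ d(d+1)/2`. -/
theorem absolute_bound_real (n d : ℕ) (hd : 0 < d)
    (α : ℝ) (hα0 : 0 ≤ α) (hα1 : α < 1)
    (x : Fin n → EuclideanSpace ℝ (Fin d))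
    (hunit : ∀ i, ‖x i‖ = 1)
    (hangle : ∀ i j, i ≠ j → ‖(inner ℝ (x i) (x j) : ℝ)‖ = α) :
    n ≤ d * (d + 1) / 2 := by
  have hinner : ∀ i k, (inner ℝ (x i) (x k) : ℝ) = ∑ a, x i a * x k a := by
    intro i k
    simp [PiLp.inner_apply, RCLike.inner_apply, mul_comm]
  have e : ∀ i k : Fin n, (inner ℝ (x i) (x k) : ℝ)^2 = if i = k then 1 else α^2 := by
    intro i k
    by_cases h : i = k
    · subst h
      rw [real_inner_self_eq_norm_sq, hunit]
      norm_num
    · simp only [h, if_false]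
      rw [← sq_abs, ← Real.norm_eq_abs, hangle i k h]
  set v : Fin n → Sym2 (Fin d) → ℝ := fun i =>
    Sym2.lift ⟨fun a b => x i a * x i b, fun a b => mul_comm _ _⟩ with hv
  have hli : LinearIndependent ℝ v := by
    rw [Fintype.linearIndependent_iff]
    intro g hg
    have hab : ∀ a b : Fin d, ∑ i, g i * (x i a * x i b) = 0 := by
      intro a b
      have := congrFun hg s(a, b)
      simpa [hv, Finset.sum_apply] using this
    have swap3 : ∀ (f : Fin n → Fin d → Fin d → ℝ),
        ∑ i, ∑ a, ∑ b, f i a b = ∑ a, ∑ b, ∑ i, f i a b := by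
      intro f
      rw [Finset.sum_comm]
      exact Finset.sum_congr rfl fun a _ => Finset.sum_comm
    have key : ∀ k : Fin n, ∑ i, g i * (inner ℝ (x i) (x k) : ℝ)^2 = 0 := by
      intro k
      calc ∑ i, g i * (inner ℝ (x i) (x k) : ℝ)^2
          = ∑ i, ∑ a, ∑ b, g i * (x i a * x i b) * (x k a * x k b) := by
            refine Finset.sum_congr rfl fun i _ => ?_
            rw [hinner, sq, Finset.sum_mul_sum, Finset.mul_sum]
            refine Finset.sum_congr rfl fun a _ => ?_
            rw [Finset.mul_sum]
            exact Finset.sum_congr rfl fun b _ => by ring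
        _ = ∑ a, ∑ b, ∑ i, g i * (x i a * x i b) * (x k a * x k b) := swap3 _
        _ = 0 := by
            refine Finset.sum_eq_zero fun a _ => Finset.sum_eq_zero fun b _ => ?_
            rw [← Finset.sum_mul, hab, zero_mul]
    have key2 : ∀ k : Fin n, α^2 * (∑ i, g i) + g k * (1 - α^2) = 0 := by
      intro k
      have h0 := key k
      simp_rw [e] at h0
      calc α^2 * (∑ i, g i) + g k * (1 - α^2)
          = ∑ i, g i * α^2 + ∑ i, (if i = k then g i * (1 - α^2) else 0) := by
            rw [Finset.sum_ite_eq' Finset.univ k, Finset.mul_sum]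
            simp [Finset.mul_sum, mul_comm]
        _ = ∑ i, (g i * α^2 + if i = k then g i * (1 - α^2) else 0) :=
            (Finset.sum_add_distrib).symm
        _ = ∑ i, g i * (if i = k then 1 else α^2) := by
            refine Finset.sum_congr rfl fun i _ => ?_
            split_ifs <;> ring
        _ = 0 := h0
    have hS : (∑ i, g i) = 0 := by
      have hsum : (∑ k, (α^2 * (∑ i, g i) + g k * (1 - α^2))) = 0 :=
        Finset.sum_eq_zero fun k _ => key2 k
      rw [Finset.sum_add_distrib, Finset.sum_const, Finset.card_univ, Fintype.card_fin,
        ← Finset.sum_mul, nsmul_eq_mul] at hsum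
      have hfac : (∑ i, g i) * ((n : ℝ) * α^2 + (1 - α^2)) = 0 := by
        linear_combination hsum
      have hpos : (n : ℝ) * α^2 + (1 - α^2) > 0 := by
        have h1 : α^2 < 1 := by nlinarith
        have h2 : (0:ℝ) ≤ (n : ℝ) * α^2 := by positivity
        linarith
      exact (mul_eq_zero.mp hfac).resolve_right (ne_of_gt hpos)
    intro k
    have := key2 k
    rw [hS, mul_zero, zero_add] at this
    have h1 : (1 : ℝ) - α^2 ≠ 0 := by nlinarith
    exact (mul_eq_zero.mp this).resolve_right h1
  have hcard := hli.fintype_card_le_finrank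
  rw [Module.finrank_fintype_fun_eq_card, Sym2.card, Fintype.card_fin, Fintype.card_fin,
    Nat.choose_two_right, Nat.add_sub_cancel, Nat.mul_comm] at hcard
  simpa using hcard
end

section
/- Let n, r, c be positive integers with r ≥ 2, δ = n − rc − 2, and let θ > 0 > τ be the roots of x² − δx − (n−1). If δ ≠ 0 and the multiplicities m_θ = n(r−1)(−τ)/(θ−τ) and m_τ = n(r−1)θ/(θ−τ) are integers, then θ and τ are integers. -/
/-- **Integrality of drackn eigenvalues.** Let `n, r, c` be positive integers
with `r ≥ 2`, `δ = n - rc - 2`, and let `θ > 0 > τ` be the roots of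
`x² - δx - (n-1)`.  If `δ ≠ 0` and the multiplicities
`m_θ = n(r-1)(-τ)/(θ-τ)` and `m_τ = n(r-1)θ/(θ-τ)` are integers, then `θ` and
`τ` are integers. -/
theorem drackn_eigenvalues_integral (n r c : ℕ) (hn : 0 < n) (hr : 2 ≤ r)
    (hc : 0 < c)
    (δ θ τ : ℝ) (hδ : δ = (n : ℝ) - r * c - 2)
    (hθpos : 0 < θ) (hτneg : τ < 0)
    (hprod : θ * τ = -((n : ℝ) - 1)) (hsum : θ + τ = δ)
    (hδne : δ ≠ 0)
    (mθ mτ : ℤ)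
    (hmθ : (mθ : ℝ) = (n : ℝ) * ((r : ℝ) - 1) * (-τ) / (θ - τ))
    (hmτ : (mτ : ℝ) = (n : ℝ) * ((r : ℝ) - 1) * θ / (θ - τ)) :
    (∃ a : ℤ, θ = (a : ℝ)) ∧ (∃ b : ℤ, τ = (b : ℝ)) := by
  set d : ℤ := (n : ℤ) - r * c - 2 with hd
  have hdR : (d : ℝ) = δ := by rw [hδ, hd]; push_cast; ring
  have hspos : 0 < θ - τ := by linarith
  have hsne : θ - τ ≠ 0 := ne_of_gt hspos
  rw [eq_div_iff hsne] at hmθ hmτ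
  -- key identity : (mτ - mθ) * (θ - τ) = n (r-1) δ
  have hkey : ((mτ - mθ : ℤ) : ℝ) * (θ - τ) = (n : ℝ) * ((r : ℝ) - 1) * δ := by
    push_cast
    rw [← hsum]; ring_nf
    ring_nf at hmθ hmτ
    linarith [hmθ, hmτ]
  set k : ℤ := mτ - mθ with hk
  have hNpos : (0 : ℝ) < (n : ℝ) * ((r : ℝ) - 1) := by
    have h1 : (1 : ℝ) ≤ (n : ℝ) := by exact_mod_cast hn
    have h2 : (2 : ℝ) ≤ (r : ℝ) := by exact_mod_cast hr
    nlinarith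
  have hkne : k ≠ 0 := by
    intro h
    rw [h] at hkey
    simp at hkey
    rcases hkey with (h1 | h1) | h1
    · exact absurd h1 (by exact_mod_cast hn.ne')
    · have h2 : (2 : ℝ) ≤ (r : ℝ) := by exact_mod_cast hr
      linarith
    · exact hδne h1
  set M : ℤ := (n : ℤ) * ((r : ℤ) - 1) * d with hM
  have hMR : ((M : ℤ) : ℝ) = (n : ℝ) * ((r : ℝ) - 1) * δ := by
    rw [← hdR, hM, hd]; push_cast; ring
  set D : ℤ := d ^ 2 + 4 * ((n : ℤ) - 1) with hD
  have hDR : ((D : ℤ) : ℝ) = (θ - τ) ^ 2 := by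
    have : (θ - τ) ^ 2 = δ ^ 2 + 4 * ((n : ℝ) - 1) := by
      have : (θ - τ) ^ 2 = (θ + τ) ^ 2 - 4 * (θ * τ) := by ring
      rw [this, hsum, hprod]; ring
    rw [this, ← hdR, hD, hd]; push_cast; ring
  -- k^2 * D = M^2
  have hsq : k ^ 2 * D = M ^ 2 := by
    have : ((k ^ 2 * D : ℤ) : ℝ) = ((M ^ 2 : ℤ) : ℝ) := by
      push_cast
      rw [hDR, hMR, ← hkey]; push_cast; ring
    exact_mod_cast this
  have hdvd : k ∣ M := by
    rw [← Int.pow_dvd_pow_iff (two_ne_zero)]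
    exact ⟨D, hsq.symm⟩
  obtain ⟨e, he⟩ := hdvd
  have hDe : D = e ^ 2 := by
    have h2 : k ^ 2 * D = k ^ 2 * e ^ 2 := by rw [hsq, he]; ring
    exact mul_left_cancel₀ (pow_ne_zero 2 hkne) h2
  set e' : ℤ := |e| with he'
  have hDe' : D = e' ^ 2 := by rw [hDe, he', sq_abs]
  have hse' : θ - τ = (e' : ℝ) := by
    have h1 : (θ - τ) ^ 2 = ((e' : ℝ)) ^ 2 := by rw [← hDR, hDe']; push_cast; ring
    have h2 : (0 : ℝ) ≤ (e' : ℝ) := by positivity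
    nlinarith
  -- parity : Even (d + e')
  have hpar : Even (d + e') := by
    have h4 : Even (4 * ((n : ℤ) - 1)) := ⟨2 * ((n : ℤ) - 1), by ring⟩
    have h1 : Even (e' ^ 2) ↔ Even (d ^ 2) := by
      rw [← hDe', hD, Int.even_add]
      exact ⟨fun h => h.mpr h4, fun h => iff_of_true h h4⟩
    rw [Int.even_pow' two_ne_zero, Int.even_pow' two_ne_zero] at h1
    rw [Int.even_add]
    exact h1.symm
  obtain ⟨a, ha⟩ := hpar
  have hθa : θ = (a : ℝ) := by
    have h2a : ((d + e' : ℤ) : ℝ) = 2 * (a : ℝ) := by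
      rw [ha]; push_cast; ring
    push_cast at h2a
    rw [hdR] at h2a
    linarith [hse', hsum]
  have hτb : τ = ((a - e' : ℤ) : ℝ) := by
    push_cast
    have := hse'
    rw [hθa] at this
    linarith
  exact ⟨⟨a, hθa⟩, ⟨a - e', hτb⟩⟩
end

section
/- Let X be an abelian (n,r,c)-drackn given by a normalized arc function f with abelian group ⟨f⟩ of order r, and let φ be a non-trivial linear character of ⟨f⟩. Then the n×n matrix A(K_n)^{φ(f)} (with (u,v)-entry φ(f(u,v)) for u ≠ v and 0 on the diagonal) is a Seidel matrix with exactly two distinct eigenvalues θ and τ, of multiplicities m_θ/(r−1) and m_τ/(r−1) respectively, where m_θ, m_τ are the multiplicities of θ, τ in X. -/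
open Matrix Polynomial Finset

section AuxSpectral

variable {V : Type*} [Fintype V] [DecidableEq V]

lemma aux_conj_pow {R : Type*} [CommRing R] [StarRing R] (U D : Matrix V V R)
    (h1 : U * star U = 1) (h2 : star U * U = 1) (k : ℕ) :
    (U * D * star U) ^ k = U * D ^ k * star U := by
  induction k with
  | zero => simp [h1]
  | succ k ih =>
    rw [pow_succ, ih, pow_succ]
    have h : star U * (U * (D * star U)) = D * star U := by
      rw [← mul_assoc, h2, one_mul]
    simp only [mul_assoc, h]

variable {𝕜 : Type*} [RCLike 𝕜] {A : Matrix V V 𝕜} (hA : A.IsHermitian)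

lemma aux_pow_eq (k : ℕ) :
    A ^ k = (hA.eigenvectorUnitary : Matrix V V 𝕜) *
      (Matrix.diagonal (RCLike.ofReal ∘ hA.eigenvalues)) ^ k *
      star (hA.eigenvectorUnitary : Matrix V V 𝕜) := by
  conv_lhs => rw [hA.spectral_theorem]
  exact aux_conj_pow _ _ (mem_unitaryGroup_iff.mp (hA.eigenvectorUnitary).2)
    (mem_unitaryGroup_iff'.mp (hA.eigenvectorUnitary).2) k

lemma aux_trace_pow (k : ℕ) :
    (A ^ k).trace = ∑ v, (RCLike.ofReal (hA.eigenvalues v) : 𝕜) ^ k := by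
  rw [aux_pow_eq hA k, Matrix.trace_mul_cycle,
    mem_unitaryGroup_iff'.mp (hA.eigenvectorUnitary).2, Matrix.one_mul,
    Matrix.diagonal_pow, Matrix.trace_diagonal]
  simp

end AuxSpectral

section AuxReal

variable {V : Type*} [Fintype V] [DecidableEq V] {A : Matrix V V ℝ} (hA : A.IsHermitian)

lemma aux_pow_eq_real (k : ℕ) :
    A ^ k = (hA.eigenvectorUnitary : Matrix V V ℝ) *
      Matrix.diagonal (fun v => hA.eigenvalues v ^ k) *
      star (hA.eigenvectorUnitary : Matrix V V ℝ) := by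
  have hfun : ((RCLike.ofReal ∘ hA.eigenvalues : V → ℝ) ^ k) =
      fun v => hA.eigenvalues v ^ k := by
    funext v
    simp [RCLike.ofReal_real_eq_id]
  rw [aux_pow_eq hA k, Matrix.diagonal_pow, hfun]

lemma aux_aeval_eq (P : ℝ[X]) :
    Polynomial.aeval A P = (hA.eigenvectorUnitary : Matrix V V ℝ) *
      Matrix.diagonal (fun v => P.eval (hA.eigenvalues v)) *
      star (hA.eigenvectorUnitary : Matrix V V ℝ) := by
  induction P using Polynomial.induction_on' with
  | add p q hp hq =>
    rw [_root_.map_add, hp, hq]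
    have : (Matrix.diagonal fun v => (p + q).eval (hA.eigenvalues v)) =
        Matrix.diagonal (fun v => p.eval (hA.eigenvalues v)) +
        Matrix.diagonal (fun v => q.eval (hA.eigenvalues v)) := by
      have h0 : (fun v => (p + q).eval (hA.eigenvalues v)) =
          fun v => p.eval (hA.eigenvalues v) + q.eval (hA.eigenvalues v) := by
        funext v; simp
      rw [h0, ← Matrix.diagonal_add]
    rw [this, mul_add, add_mul]
  | monomial k c =>
    rw [Polynomial.aeval_monomial, aux_pow_eq_real hA k,
      Algebra.algebraMap_eq_smul_one]
    rw [smul_mul_assoc, one_mul, ← smul_mul_assoc, ← mul_smul_comm]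
    have : c • Matrix.diagonal (fun v => hA.eigenvalues v ^ k) =
        Matrix.diagonal (fun v => ((monomial k) c).eval (hA.eigenvalues v)) := by
      ext i j
      by_cases h : i = j <;>
        simp [Matrix.diagonal_apply, h, Polynomial.eval_monomial, mul_comm]
    rw [this]

lemma aux_aeval_eq_zero (P : ℝ[X]) (hroot : ∀ v, P.eval (hA.eigenvalues v) = 0) :
    Polynomial.aeval A P = 0 := by
  rw [aux_aeval_eq hA P]
  have : (Matrix.diagonal fun v => P.eval (hA.eigenvalues v)) = 0 := by
    have : (fun v => P.eval (hA.eigenvalues v)) = fun _ => 0 := funext hroot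
    rw [this, Matrix.diagonal_zero]
  rw [this, Matrix.mul_zero, Matrix.zero_mul]

lemma aux_det_sub (μ : ℝ) :
    (A - μ • 1).det = ∏ v, (hA.eigenvalues v - μ) := by
  have key : A - μ • (1 : Matrix V V ℝ) = (hA.eigenvectorUnitary : Matrix V V ℝ) *
      Matrix.diagonal (fun v => hA.eigenvalues v - μ) *
      star (hA.eigenvectorUnitary : Matrix V V ℝ) := by
    have h1 : A = (hA.eigenvectorUnitary : Matrix V V ℝ) *
        Matrix.diagonal (fun v => hA.eigenvalues v) *
        star (hA.eigenvectorUnitary : Matrix V V ℝ) := by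
      have := aux_pow_eq_real hA 1
      simpa using this
    have h2 : μ • (1 : Matrix V V ℝ) = (hA.eigenvectorUnitary : Matrix V V ℝ) *
        Matrix.diagonal (fun _ : V => μ) *
        star (hA.eigenvectorUnitary : Matrix V V ℝ) := by
      rw [← Matrix.smul_one_eq_diagonal, mul_smul_comm, mul_one, smul_mul_assoc,
        mem_unitaryGroup_iff.mp (hA.eigenvectorUnitary).2]
    conv_lhs => rw [h1, h2]
    rw [← sub_mul, ← mul_sub, Matrix.diagonal_sub]
  rw [key, Matrix.det_mul_right_comm,
    mem_unitaryGroup_iff.mp (hA.eigenvectorUnitary).2, Matrix.one_mul,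
    Matrix.det_diagonal]

end AuxReal

lemma aux_sum_char {G : Type*} [CommGroup G] [Fintype G] (φ : G →* ℂ) (hφ : φ ≠ 1) :
    ∑ g : G, φ g = 0 := by
  obtain ⟨h0, hh0⟩ : ∃ h0 : G, φ h0 ≠ 1 := by
    by_contra hcon
    push_neg at hcon
    exact hφ (MonoidHom.ext fun g => by rw [hcon g]; rfl)
  have key : φ h0 * ∑ g : G, φ g = ∑ g : G, φ g := by
    rw [Finset.mul_sum]
    calc ∑ g : G, φ h0 * φ g = ∑ g : G, φ (h0 * g) :=
          Finset.sum_congr rfl fun g _ => (_root_.map_mul φ h0 g).symm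
      _ = ∑ g : G, φ g := Fintype.sum_equiv (Equiv.mulLeft h0) _ _ (fun x => rfl)
  have h2 : (φ h0 - 1) * ∑ g : G, φ g = 0 := by linear_combination key
  rcases mul_eq_zero.mp h2 with h | h
  · exact absurd (by linear_combination h : φ h0 = 1) hh0
  · exact h




/-- Distance-regular antipodal cover of a complete graph with fibre map `π`,
fibre size `r` and parameter `c`. -/
def IsDracknCover {V ι : Type*} [Fintype V] [Fintype ι] (X : SimpleGraph V)
    (π : V → ι) (r c : ℕ) : Prop :=
  (∀ i : ι, Nat.card {v : V // π v = i} = r) ∧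
  (∀ u v : V, X.Adj u v → π u ≠ π v) ∧
  (∀ (u : V) (i : ι), π u ≠ i → ∃! v : V, π v = i ∧ X.Adj u v) ∧
  (∀ u v : V, u ≠ v → (π u = π v ↔ X.dist u v = 3)) ∧
  (∀ u v : V, X.dist u v = 2 → Nat.card {w : V // X.Adj u w ∧ X.Adj v w} = c)

set_option maxHeartbeats 2000000 in
/-- **Lines from abelian drackns.** Let `X` be an abelian `(n,r,c)`-drackn
determined by a normalized arc function `f` with values in the abelian group
`G = ⟨f⟩` of order `r` (vertices `(u, a)`, with `(u,a) ~ (v,b)` iff `u ≠ v` and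
`b = a * f u v`), with eigenvalues `n-1, θ, -1, τ` of multiplicities
`1, m_θ, n-1, m_τ`.  If `φ` is a non-trivial linear character of `G`, then the
`n × n` matrix `A(K_n)^{φ(f)}`, with `(u,v)`-entry `φ(f u v)` for `u ≠ v` and
zero diagonal, is a Seidel matrix having exactly two distinct eigenvalues
`θ` and `τ`, with multiplicities `m_θ/(r-1)` and `m_τ/(r-1)` respectively. -/
theorem lines_from_abelian_drackn (n r c : ℕ) (hn : 2 ≤ n) (hr : 2 ≤ r)
    (G : Type*) [CommGroup G] [Fintype G] [DecidableEq G]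
    (hG : Fintype.card G = r)
    (f : Fin n → Fin n → G)
    (hsym : ∀ u v, f v u = (f u v)⁻¹)
    (hnorm : ∀ v, f ⟨0, by omega⟩ v = 1)
    (hgen : Subgroup.closure (Set.range fun p : Fin n × Fin n => f p.1 p.2) = ⊤)
    (X : SimpleGraph (Fin n × G)) [DecidableRel X.Adj]
    (hXdef : X = SimpleGraph.fromRel
      (fun x y : Fin n × G => x.1 ≠ y.1 ∧ y.2 = x.2 * f x.1 y.1))
    (hX : IsDracknCover X Prod.fst r c)
    (θ τ : ℝ) (hθpos : 0 < θ) (hτneg : τ < 0)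
    (hA : (X.adjMatrix ℝ).IsHermitian)
    (heig : ∀ v, hA.eigenvalues v = (n : ℝ) - 1 ∨ hA.eigenvalues v = θ ∨
      hA.eigenvalues v = -1 ∨ hA.eigenvalues v = τ)
    (mθ mτ : ℕ)
    (hmθ : Nat.card {v // hA.eigenvalues v = θ} = mθ)
    (hmτ : Nat.card {v // hA.eigenvalues v = τ} = mτ)
    (φ : G →* ℂ) (hφ : φ ≠ 1)
    (M : Matrix (Fin n) (Fin n) ℂ)
    (hM : M = Matrix.of fun u v : Fin n => if u = v then 0 else φ (f u v)) :
    ∃ hMh : M.IsHermitian,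
      (∀ i, M i i = 0) ∧
      (∀ i j, i ≠ j → ‖M i j‖ = 1) ∧
      (∀ i, hMh.eigenvalues i = θ ∨ hMh.eigenvalues i = τ) ∧
      (∃ i, hMh.eigenvalues i = θ) ∧ (∃ i, hMh.eigenvalues i = τ) ∧
      (∃ kθ kτ : ℕ, mθ = (r - 1) * kθ ∧ mτ = (r - 1) * kτ ∧
        Nat.card {i // hMh.eigenvalues i = θ} = kθ ∧
        Nat.card {i // hMh.eigenvalues i = τ} = kτ) := by
  classical
  have hn0 : 0 < n := by omega
  have hnR : (2:ℝ) ≤ (n:ℝ) := by exact_mod_cast hn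
  have hrR : (2:ℝ) ≤ (r:ℝ) := by exact_mod_cast hr
  -- φ values are unimodular
  have habs : ∀ g : G, ‖φ g‖ = 1 := by
    intro g
    have hk : Fintype.card G ≠ 0 := Fintype.card_pos.ne'
    have h1 : ‖φ g‖ ^ Fintype.card G = 1 := by
      rw [← norm_pow, ← _root_.map_pow, pow_card_eq_one, _root_.map_one, norm_one]
    have hpos : 0 ≤ ‖φ g‖ := norm_nonneg _
    rcases lt_trichotomy (‖φ g‖) 1 with hlt | heq1 | hgt
    · have := pow_lt_one₀ hpos hlt hk
      rw [h1] at this; exact absurd this (lt_irrefl 1)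
    · exact heq1
    · have := one_lt_pow₀ hgt hk
      rw [h1] at this; exact absurd this (lt_irrefl 1)
  have hne0 : ∀ g : G, φ g ≠ 0 := by
    intro g h
    have := habs g; rw [h] at this; simp at this
  have hconj : ∀ g : G, (starRingEnd ℂ) (φ g) = φ g⁻¹ := by
    intro g
    have h1 : φ g * φ g⁻¹ = 1 := by rw [← _root_.map_mul, mul_inv_cancel, _root_.map_one]
    have h2 : φ g * (starRingEnd ℂ) (φ g) = 1 := by
      rw [Complex.mul_conj, Complex.normSq_eq_norm_sq, habs g]
      norm_num
    exact mul_left_cancel₀ (hne0 g) (h2.trans h1.symm)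
  -- M entries
  have hMdiag : ∀ i, M i i = 0 := fun i => by rw [hM]; simp
  have hMapp : ∀ u v : Fin n, u ≠ v → M u v = φ (f u v) := fun u v h => by
    rw [hM]; simp [h]
  have hMh : M.IsHermitian := by
    rw [Matrix.IsHermitian]
    ext i j
    rw [Matrix.conjTranspose_apply]
    by_cases h : i = j
    · subst h; rw [hMdiag]; simp
    · rw [hMapp j i (Ne.symm h), hMapp i j h, RCLike.star_def, hconj, ← hsym]
  have habs1 : ∀ i j : Fin n, i ≠ j → ‖M i j‖ = 1 := fun i j h => by
    rw [hMapp i j h]; exact habs _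
  -- adjacency description
  have adj_iff : ∀ (u v : Fin n) (a b : G),
      X.Adj (u, a) (v, b) ↔ u ≠ v ∧ b = a * f u v := by
    intro u v a b
    rw [hXdef, SimpleGraph.fromRel_adj]
    constructor
    · rintro ⟨hne, h | h⟩
      · exact h
      · obtain ⟨h1, h2⟩ := h
        dsimp only at h1 h2
        refine ⟨Ne.symm h1, ?_⟩
        rw [hsym] at h2
        rw [h2, mul_assoc, inv_mul_cancel, mul_one]
    · rintro ⟨hne, he⟩
      exact ⟨fun hc => hne (congrArg Prod.fst hc), Or.inl ⟨hne, he⟩⟩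
  -- neighbor finset
  have hinj : ∀ (u : Fin n) (a : G), Function.Injective (fun v : Fin n => ((v, a * f u v) : Fin n × G)) :=
    fun u a v w h => congrArg Prod.fst h
  have hnbr : ∀ (u : Fin n) (a : G),
      X.neighborFinset (u, a) = (univ.erase u).image (fun v => (v, a * f u v)) := by
    intro u a
    ext ⟨v, b⟩
    rw [SimpleGraph.mem_neighborFinset, adj_iff]
    simp only [Finset.mem_image, Finset.mem_erase, Finset.mem_univ, and_true]
    constructor
    · rintro ⟨hne, rfl⟩
      exact ⟨v, Ne.symm hne, rfl⟩
    · rintro ⟨w, hw, heq⟩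
      injection heq with h1 h2
      subst h1; subst h2
      exact ⟨Ne.symm hw, rfl⟩
  set A := X.adjMatrix ℝ with hAdef
  set P : ℝ[X] := (Polynomial.X - Polynomial.C ((n : ℝ) - 1)) * (Polynomial.X - Polynomial.C θ) *
      (Polynomial.X - Polynomial.C (-1)) * (Polynomial.X - Polynomial.C τ) with hPdef
  have hPmonic : P.Monic :=
    (((monic_X_sub_C _).mul (monic_X_sub_C _)).mul (monic_X_sub_C _)).mul (monic_X_sub_C _)
  have hPdeg4 : P.natDegree = 4 := by
    rw [hPdef]
    compute_degree!
  have hProots : ∀ v, P.eval (hA.eigenvalues v) = 0 := by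
    intro v
    rcases heig v with h | h | h | h <;> rw [hPdef] <;> simp [h]
  have hPA : Polynomial.aeval A P = 0 := aux_aeval_eq_zero hA P hProots
  -- distance bound
  have hdist3 : ∀ p q : Fin n × G, X.Reachable p q → X.dist p q ≤ 3 := by
    intro p q hreach
    by_contra hgt
    push_neg at hgt
    obtain ⟨w, hw⟩ := hreach.exists_walk_length_eq_dist
    have hpos : (0 : ℝ) < (A ^ X.dist p q) p q := by
      rw [hAdef, SimpleGraph.adjMatrix_pow_apply_eq_card_walk]
      have h0 : 0 < Fintype.card {w' : X.Walk p q | w'.length = X.dist p q} :=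
        Fintype.card_pos_iff.mpr ⟨⟨w, hw⟩⟩
      exact_mod_cast h0
    have hzero : ∀ i, i < X.dist p q → (A ^ i) p q = 0 := by
      intro i hi
      rw [hAdef, SimpleGraph.adjMatrix_pow_apply_eq_card_walk]
      have h0 : Fintype.card {w' : X.Walk p q | w'.length = i} = 0 := by
        rw [Fintype.card_eq_zero_iff]
        refine ⟨?_⟩
        rintro ⟨w', hw'⟩
        have hle : X.dist p q ≤ w'.length := SimpleGraph.dist_le w'
        have : w'.length = i := hw'
        omega
      rw [h0]; norm_num
    have hXd : (Polynomial.X ^ X.dist p q : ℝ[X]) =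
        Polynomial.X ^ X.dist p q %ₘ P + P * (Polynomial.X ^ X.dist p q /ₘ P) :=
      (Polynomial.modByMonic_add_div _ P).symm
    have hAd : A ^ X.dist p q = Polynomial.aeval A (Polynomial.X ^ X.dist p q %ₘ P) := by
      have h0 := congrArg (Polynomial.aeval A) hXd
      rwa [_root_.map_pow, Polynomial.aeval_X, _root_.map_add, _root_.map_mul, hPA, zero_mul, add_zero] at h0
    have hRdeg : (Polynomial.X ^ X.dist p q %ₘ P).natDegree < 4 := by
      have h1 : P ≠ 1 := fun h => by rw [h] at hPdeg4; simp at hPdeg4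
      have h0 := Polynomial.natDegree_modByMonic_lt (Polynomial.X ^ X.dist p q) hPmonic h1
      rwa [hPdeg4] at h0
    have hentry : (A ^ X.dist p q) p q = 0 := by
      rw [hAd, Polynomial.aeval_eq_sum_range' hRdeg]
      rw [Matrix.sum_apply]
      apply Finset.sum_eq_zero
      intro i hi
      rw [Matrix.smul_apply, hzero i (lt_of_lt_of_le (Finset.mem_range.mp hi) (by omega)), smul_zero]
    rw [hentry] at hpos
    exact lt_irrefl _ hpos
  -- reachability, distance two
  have reach : ∀ (u v : Fin n) (a g : G), u ≠ v → X.Reachable (u, a) (v, a * g) := by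
    intro u v a g hne
    have hadj : X.Adj (u, a) (v, a * f u v) := (adj_iff u v a _).mpr ⟨hne, rfl⟩
    by_cases hg : g = f u v
    · subst hg; exact hadj.reachable
    · have hne2 : ((v, a * f u v) : Fin n × G) ≠ (v, a * g) := by
        intro hcon
        injection hcon with h1 h2
        exact hg (mul_left_cancel h2).symm
      have h3 : X.dist (v, a * f u v) (v, a * g) = 3 :=
        (hX.2.2.2.1 _ _ hne2).mp rfl
      have hr2 : X.Reachable (v, a * f u v) (v, a * g) :=
        SimpleGraph.Reachable.of_dist_ne_zero (by rw [h3]; omega)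
      exact hadj.reachable.trans hr2
  have dist2 : ∀ (u v : Fin n) (a g : G), u ≠ v → g ≠ f u v →
      X.dist (u, a) (v, a * g) = 2 := by
    intro u v a g hne hg
    have hreach := reach u v a g hne
    have hne' : ((u, a) : Fin n × G) ≠ (v, a * g) := fun h => hne (congrArg Prod.fst h)
    have h0 : X.dist (u, a) (v, a * g) ≠ 0 :=
      SimpleGraph.dist_ne_zero_iff_ne_and_reachable.mpr ⟨hne', hreach⟩
    have h1 : X.dist (u, a) (v, a * g) ≠ 1 := by
      intro h
      have hadj := SimpleGraph.dist_eq_one_iff_adj.mp h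
      rw [adj_iff] at hadj
      exact hg (mul_left_cancel hadj.2)
    have h3 : X.dist (u, a) (v, a * g) ≠ 3 := by
      intro h
      exact hne ((hX.2.2.2.1 (u, a) (v, a * g) hne').mpr h)
    have h4 := hdist3 _ _ hreach
    omega
  -- counting common neighbours
  set Nw : Fin n → Fin n → G → ℕ := fun u v g =>
    ((univ : Finset (Fin n)).filter fun w => (w ≠ u ∧ w ≠ v) ∧ f u w * f w v = g).card
    with hNwdef
  have hcommon : ∀ (u v : Fin n) (a g : G), u ≠ v →
      Nat.card {s : Fin n × G // X.Adj (u, a) s ∧ X.Adj (v, a * g) s} = Nw u v g := by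
    intro u v a g hne
    have e : {s : Fin n × G // X.Adj (u, a) s ∧ X.Adj (v, a * g) s} ≃
        {w : Fin n // (w ≠ u ∧ w ≠ v) ∧ f u w * f w v = g} := by
      refine ⟨fun s => ⟨s.1.1, ?_⟩, fun w => ⟨(w.1, a * f u w.1), ?_⟩, ?_, ?_⟩
      · obtain ⟨⟨w, b⟩, h1, h2⟩ := s
        obtain ⟨hwu, hb⟩ := (adj_iff u w a b).mp h1
        obtain ⟨hwv, hb2⟩ := (adj_iff v w (a * g) b).mp h2
        refine ⟨⟨Ne.symm hwu, Ne.symm hwv⟩, ?_⟩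
        have h3 : a * f u w = a * (g * f v w) := by
          rw [← mul_assoc]; exact hb.symm.trans hb2
        have h4 : f u w = g * f v w := mul_left_cancel h3
        rw [h4, hsym v w]
        exact mul_inv_cancel_right g (f v w)
      · obtain ⟨w, ⟨⟨hwu, hwv⟩, hg⟩⟩ := w
        refine ⟨(adj_iff u w a _).mpr ⟨Ne.symm hwu, rfl⟩,
          (adj_iff v w (a * g) _).mpr ⟨Ne.symm hwv, ?_⟩⟩
        show a * f u w = a * g * f v w
        rw [← hg, hsym v w]
        group
      · rintro ⟨⟨w, b⟩, h1, h2⟩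
        have hb := ((adj_iff u w a b).mp h1).2
        exact Subtype.ext (Prod.ext rfl hb.symm)
      · intro w
        exact Subtype.ext rfl
    rw [Nat.card_congr e, Nat.card_eq_fintype_card, Fintype.card_subtype]
  have hcval : ∀ (u v : Fin n) (g : G), u ≠ v → g ≠ f u v → Nw u v g = c := by
    intro u v g hne hg
    have hd := dist2 u v 1 g hne hg
    have h0 := hX.2.2.2.2 (u, 1) (v, 1 * g) hd
    rwa [hcommon u v 1 g hne] at h0
  have hcount : ∀ (u v : Fin n), u ≠ v → Nw u v (f u v) + (r - 1) * c = n - 2 := by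
    intro u v hne
    have htot : ∑ g : G, Nw u v g = n - 2 := by
      have hmaps : ∀ w ∈ (univ : Finset (Fin n)).filter (fun w => w ≠ u ∧ w ≠ v),
          f u w * f w v ∈ (univ : Finset G) := fun _ _ => Finset.mem_univ _
      have hfib := Finset.card_eq_sum_card_fiberwise hmaps
      have hcard : ((univ : Finset (Fin n)).filter fun w => w ≠ u ∧ w ≠ v).card = n - 2 := by
        have hset : ((univ : Finset (Fin n)).filter fun w => w ≠ u ∧ w ≠ v) =
            ((univ : Finset (Fin n)).erase u).erase v := by
          ext w
          simp only [Finset.mem_filter, Finset.mem_erase, Finset.mem_univ, and_true, true_and]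
          tauto
        rw [hset, Finset.card_erase_of_mem (Finset.mem_erase.mpr ⟨Ne.symm hne, Finset.mem_univ v⟩),
          Finset.card_erase_of_mem (Finset.mem_univ u), Finset.card_univ, Fintype.card_fin]
        omega
      rw [hcard] at hfib
      rw [hfib]
      exact Finset.sum_congr rfl fun g _ =>
        (congrArg Finset.card (Finset.filter_filter _ _ _)).symm
    have hsplit := Finset.add_sum_erase (univ : Finset G) (fun g => Nw u v g) (Finset.mem_univ (f u v))
    have herase : ∑ g ∈ (univ : Finset G).erase (f u v), Nw u v g = (r - 1) * c := by
      rw [Finset.sum_congr rfl (fun g hgm => hcval u v g hne (Finset.mem_erase.mp hgm).1),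
        Finset.sum_const, Finset.card_erase_of_mem (Finset.mem_univ _), Finset.card_univ, hG,
        smul_eq_mul]
    rw [← htot, ← hsplit, herase]
  -- the matrix identity for A*A entries
  have hA2 : ∀ p q : Fin n × G, (A * A) p q =
      (((univ : Finset (Fin n × G)).filter fun s => X.Adj p s ∧ X.Adj q s).card : ℝ) := by
    intro p q
    rw [Matrix.mul_apply, ← Finset.sum_boole]
    apply Finset.sum_congr rfl
    intro s _
    have hsq : X.Adj s q ↔ X.Adj q s := X.adj_comm s q
    rw [hAdef]
    by_cases h1 : X.Adj p s <;> by_cases h2 : X.Adj q s <;>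
      simp [SimpleGraph.adjMatrix_apply, h1, h2, hsq]
  have hA2' : ∀ (u v : Fin n) (a g : G), u ≠ v →
      (A * A) (u, a) (v, a * g) = (Nw u v g : ℝ) := by
    intro u v a g hne
    rw [hA2, ← hcommon u v a g hne, Nat.card_eq_fintype_card, Fintype.card_subtype]
  -- c is at least one
  haveI : Nontrivial G := Fintype.one_lt_card_iff_nontrivial.mp (by rw [hG]; omega)
  have hc1 : 1 ≤ c := by
    have h01 : (⟨0, by omega⟩ : Fin n) ≠ ⟨1, by omega⟩ := by
      intro h; exact absurd (congrArg Fin.val h) (by norm_num)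
    obtain ⟨g, hgne⟩ := exists_ne (f ⟨0, by omega⟩ ⟨1, by omega⟩)
    have hd := dist2 ⟨0, by omega⟩ ⟨1, by omega⟩ 1 g h01 hgne
    obtain ⟨w, hw⟩ := SimpleGraph.exists_walk_of_dist_ne_zero (by rw [hd]; omega)
    have hpos : (0 : ℝ) < (A ^ 2) ((⟨0, by omega⟩ : Fin n), (1:G)) ((⟨1, by omega⟩ : Fin n), 1 * g) := by
      rw [hAdef, SimpleGraph.adjMatrix_pow_apply_eq_card_walk]
      have h0 : 0 < Fintype.card {w' : X.Walk ((⟨0, by omega⟩ : Fin n), (1:G)) ((⟨1, by omega⟩ : Fin n), 1 * g) | w'.length = 2} := by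
        refine Fintype.card_pos_iff.mpr ⟨⟨w, ?_⟩⟩
        show w.length = 2
        rw [hw, hd]
      exact_mod_cast h0
    rw [pow_two, hA2' _ _ 1 g h01, hcval _ _ g h01 hgne] at hpos
    exact_mod_cast hpos
  set lamR : ℝ := (n : ℝ) - 2 - ((r : ℝ) - 1) * c with hlamRdef
  have hlamR : ∀ (u v : Fin n), u ≠ v → (Nw u v (f u v) : ℝ) = lamR := by
    intro u v hne
    have h2 : Nw u v (f u v) + (r - 1) * c + 2 = n := by
      have := hcount u v hne; omega
    have h3 : (Nw u v (f u v) : ℝ) + ((r : ℝ) - 1) * c + 2 = n := by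
      have h4 : ((Nw u v (f u v) + (r - 1) * c + 2 : ℕ) : ℝ) = (n : ℝ) := by exact_mod_cast congrArg (Nat.cast (R := ℝ)) h2
      push_cast [Nat.cast_sub (by omega : 1 ≤ r)] at h4
      linarith
    rw [hlamRdef]; linarith
  set δR : ℝ := lamR - c with hδRdef
  -- character sum
  have hsumφ : ∑ g : G, φ g = 0 := aux_sum_char φ hφ
  -- M quadratic
  have hMM : M * M = ((δR : ℝ) : ℂ) • M + (((n : ℝ) - 1 : ℝ) : ℂ) • (1 : Matrix (Fin n) (Fin n) ℂ) := by
    ext u v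
    rw [Matrix.mul_apply, Matrix.add_apply, Matrix.smul_apply, Matrix.smul_apply,
      smul_eq_mul, smul_eq_mul]
    by_cases huv : u = v
    · subst huv
      rw [hMdiag, mul_zero, Matrix.one_apply_eq, mul_one, zero_add]
      rw [← Finset.add_sum_erase _ _ (Finset.mem_univ u), hMdiag, zero_mul, zero_add]
      have hterm : ∀ w ∈ (univ : Finset (Fin n)).erase u, M u w * M w u = 1 := by
        intro w hw
        have hwu : w ≠ u := (Finset.mem_erase.mp hw).1
        rw [hMapp u w (Ne.symm hwu), hMapp w u hwu, ← _root_.map_mul, hsym, inv_mul_cancel, _root_.map_one]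
      rw [Finset.sum_congr rfl hterm, Finset.sum_const,
        Finset.card_erase_of_mem (Finset.mem_univ u), Finset.card_univ, Fintype.card_fin,
        nsmul_eq_mul, mul_one]
      push_cast [Nat.cast_sub (by omega : 1 ≤ n)]
      ring
    · rw [Matrix.one_apply_ne huv, mul_zero, add_zero]
      have hsplit2 : ∑ w : Fin n, M u w * M w v =
          ∑ w ∈ (univ : Finset (Fin n)).filter (fun w => w ≠ u ∧ w ≠ v), M u w * M w v := by
        rw [← Finset.sum_filter_add_sum_filter_not (univ : Finset (Fin n)) (fun w => w ≠ u ∧ w ≠ v)]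
        have hz : ∑ w ∈ (univ : Finset (Fin n)).filter (fun w => ¬(w ≠ u ∧ w ≠ v)),
            M u w * M w v = 0 := by
          apply Finset.sum_eq_zero
          intro w hw
          have hw2 := (Finset.mem_filter.mp hw).2
          push_neg at hw2
          by_cases hwu : w = u
          · subst hwu; rw [hMdiag, zero_mul]
          · rw [hw2 hwu, hMdiag, mul_zero]
        rw [hz, add_zero]
      rw [hsplit2]
      have hmaps : ∀ w ∈ (univ : Finset (Fin n)).filter (fun w => w ≠ u ∧ w ≠ v),
          f u w * f w v ∈ (univ : Finset G) := fun _ _ => Finset.mem_univ _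
      rw [← Finset.sum_fiberwise_of_maps_to hmaps (fun w => M u w * M w v)]
      have hinner : ∀ g ∈ (univ : Finset G),
          (∑ w ∈ ((univ : Finset (Fin n)).filter fun w => w ≠ u ∧ w ≠ v).filter
            (fun w => f u w * f w v = g), M u w * M w v) = (Nw u v g : ℂ) * φ g := by
        intro g _
        rw [Finset.filter_filter]
        have hterm : ∀ w ∈ (univ : Finset (Fin n)).filter
            (fun w => (w ≠ u ∧ w ≠ v) ∧ f u w * f w v = g), M u w * M w v = φ g := by
          intro w hw
          obtain ⟨-, ⟨hwu, hwv⟩, hfg⟩ := Finset.mem_filter.mp hw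
          rw [hMapp u w (Ne.symm hwu), hMapp w v hwv, ← _root_.map_mul, hfg]
        rw [Finset.sum_congr rfl hterm, Finset.sum_const, nsmul_eq_mul, hNwdef]
      rw [Finset.sum_congr rfl hinner]
      rw [← Finset.add_sum_erase _ _ (Finset.mem_univ (f u v))]
      have h1 : ∀ g ∈ (univ : Finset G).erase (f u v), (Nw u v g : ℂ) * φ g = (c : ℂ) * φ g := by
        intro g hgm
        rw [hcval u v g huv (Finset.mem_erase.mp hgm).1]
      rw [Finset.sum_congr rfl h1, ← Finset.mul_sum]
      have h2' : φ (f u v) + ∑ g ∈ (univ : Finset G).erase (f u v), φ g = 0 := by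
        rw [Finset.add_sum_erase _ _ (Finset.mem_univ _), hsumφ]
      have h2 : ∑ g ∈ (univ : Finset G).erase (f u v), φ g = - φ (f u v) := by
        linear_combination h2'
      rw [h2, hMapp u v huv]
      have h3 : ((Nw u v (f u v) : ℕ) : ℂ) = ((lamR : ℝ) : ℂ) := by
        rw [← hlamR u v huv]
        norm_cast
      rw [h3, hδRdef]
      push_cast
      ring
    -- degree
  have hdeg : ∀ p : Fin n × G, X.degree p = n - 1 := by
    rintro ⟨u, a⟩
    have h0 : X.degree (u, a) = ((univ.erase u).image (fun v => ((v, a * f u v) : Fin n × G))).card :=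
      congrArg Finset.card (hnbr u a)
    rw [h0, Finset.card_image_of_injective _ (hinj u a),
      Finset.card_erase_of_mem (Finset.mem_univ u), Finset.card_univ, Fintype.card_fin]
  have htrace_eq : ∀ (B : Matrix (Fin n × G) (Fin n × G) ℝ), B.trace = ∑ p, B p p :=
    fun B => rfl
  -- eigenvector facts for M
  have hxvec : ∀ i : Fin n, ∃ x : Fin n → ℂ, x ≠ 0 ∧ M *ᵥ x = (hMh.eigenvalues i : ℂ) • x := by
    intro i
    refine ⟨⇑(hMh.eigenvectorBasis i), ?_, ?_⟩
    · intro h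
      apply hMh.eigenvectorBasis.orthonormal.ne_zero i
      ext j
      exact congrFun h j
    · have h := hMh.mulVec_eigenvectorBasis i
      funext j
      have h2 := congrFun h j
      simp only [Pi.smul_apply] at h2 ⊢
      rw [h2, Complex.real_smul, smul_eq_mul]
  have hquadC : ∀ i : Fin n, ((hMh.eigenvalues i : ℝ) : ℂ)^2
      = ((δR : ℝ) : ℂ) * (hMh.eigenvalues i : ℂ) + (((n : ℝ) - 1 : ℝ) : ℂ) := by
    intro i
    obtain ⟨x, hx0, hx⟩ := hxvec i
    obtain ⟨j, hj⟩ := Function.ne_iff.mp hx0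
    have hway : ((hMh.eigenvalues i : ℂ)^2) • x =
        ((δR : ℝ) : ℂ) • ((hMh.eigenvalues i : ℂ) • x) + (((n : ℝ) - 1 : ℝ) : ℂ) • x := by
      calc ((hMh.eigenvalues i : ℂ)^2) • x = M *ᵥ (M *ᵥ x) := by
            rw [hx, Matrix.mulVec_smul, hx, smul_smul, ← sq]
        _ = (M * M) *ᵥ x := by rw [← Matrix.mulVec_mulVec]
        _ = _ := by
            rw [hMM, Matrix.add_mulVec, Matrix.smul_mulVec, Matrix.smul_mulVec,
              Matrix.one_mulVec, hx]
    have h2 := congrFun hway j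
    simp only [Pi.add_apply, Pi.smul_apply, smul_eq_mul] at h2
    have h3 : (((hMh.eigenvalues i : ℂ)^2) - (((δR : ℝ) : ℂ) * (hMh.eigenvalues i : ℂ)
        + (((n : ℝ) - 1 : ℝ) : ℂ))) * x j = 0 := by linear_combination h2
    rcases mul_eq_zero.mp h3 with h4 | h4
    · linear_combination h4
    · exact absurd h4 hj
  have hquad : ∀ i, (hMh.eigenvalues i)^2 = δR * hMh.eigenvalues i + ((n:ℝ) - 1) := by
    intro i
    exact_mod_cast hquadC i
  -- lifting eigenvalues of M to eigenvalues of A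
  have hlift : ∀ i : Fin n, ∃ v : Fin n × G, hA.eigenvalues v = hMh.eigenvalues i := by
    intro i
    obtain ⟨x, hx0, hx⟩ := hxvec i
    have hMx : ∀ u : Fin n, (∑ v ∈ (univ : Finset (Fin n)).erase u, φ (f u v) * x v)
        = (hMh.eigenvalues i : ℂ) * x u := by
      intro u
      have h1 := congrFun hx u
      simp only [Matrix.mulVec, dotProduct, Pi.smul_apply, smul_eq_mul] at h1
      rw [← Finset.add_sum_erase _ (fun v => M u v * x v) (Finset.mem_univ u), hMdiag,
        zero_mul, zero_add] at h1
      rw [← h1]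
      exact Finset.sum_congr rfl fun v hv => by
        rw [hMapp u v (Ne.symm (Finset.mem_erase.mp hv).1)]
    have hAy : X.adjMatrix ℂ *ᵥ (fun p : Fin n × G => φ p.2 * x p.1) =
        (hMh.eigenvalues i : ℂ) • (fun p : Fin n × G => φ p.2 * x p.1) := by
      funext p
      obtain ⟨u, a⟩ := p
      rw [SimpleGraph.adjMatrix_mulVec_apply, hnbr u a,
        Finset.sum_image (fun v hv w hw h => hinj u a h)]
      have hterm : ∀ v ∈ (univ : Finset (Fin n)).erase u,
          φ ((v, a * f u v) : Fin n × G).2 * x ((v, a * f u v) : Fin n × G).1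
            = φ a * (φ (f u v) * x v) := by
        intro v hv
        dsimp only
        rw [_root_.map_mul]
        ring
      rw [Finset.sum_congr rfl hterm, ← Finset.mul_sum, hMx u]
      simp only [Pi.smul_apply, smul_eq_mul]
      ring
    have hyne : (fun p : Fin n × G => φ p.2 * x p.1) ≠ 0 := by
      obtain ⟨j, hj⟩ := Function.ne_iff.mp hx0
      intro h
      have h2 := congrFun h (j, 1)
      simp only [_root_.map_one, one_mul, Pi.zero_apply] at h2
      exact hj h2
    have hdet0 : (X.adjMatrix ℂ - (hMh.eigenvalues i : ℂ) • 1).det = 0 := by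
      rw [← Matrix.exists_mulVec_eq_zero_iff]
      refine ⟨_, hyne, ?_⟩
      rw [Matrix.sub_mulVec, Matrix.smul_mulVec, Matrix.one_mulVec, hAy, sub_self]
    have hmap : X.adjMatrix ℂ - (hMh.eigenvalues i : ℂ) • 1
        = (A - hMh.eigenvalues i • 1).map Complex.ofReal := by
      rw [hAdef]
      ext p q
      simp only [Matrix.map_apply, Matrix.sub_apply, Matrix.smul_apply, Matrix.one_apply,
        SimpleGraph.adjMatrix_apply, smul_eq_mul]
      by_cases h1 : X.Adj p q <;> by_cases h2 : p = q <;>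
        simp [h1, h2] <;> push_cast <;> ring
    have hdetR : (A - hMh.eigenvalues i • 1).det = 0 := by
      have h0 := RingHom.map_det Complex.ofRealHom (A - hMh.eigenvalues i • 1)
      rw [RingHom.mapMatrix_apply] at h0
      have h1 : Complex.ofRealHom (A - hMh.eigenvalues i • 1).det = (0 : ℂ) := by
        rw [h0]
        have h2 : (A - hMh.eigenvalues i • 1).map Complex.ofRealHom
            = (A - hMh.eigenvalues i • 1).map Complex.ofReal := rfl
        rw [h2, ← hmap, hdet0]
      rw [show Complex.ofRealHom (A - hMh.eigenvalues i • 1).det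
        = ((A - hMh.eigenvalues i • 1).det : ℂ) from rfl] at h1
      exact_mod_cast h1
    have hprod : ∏ v, (hA.eigenvalues v - hMh.eigenvalues i) = 0 := by
      rw [← aux_det_sub hA (hMh.eigenvalues i)]
      exact hdetR
    obtain ⟨v, -, hv⟩ := Finset.prod_eq_zero_iff.mp hprod
    exact ⟨v, by linarith [sub_eq_zero.mp hv]⟩
  -- exclude n-1 and -1
  have hcR : (1:ℝ) ≤ (c:ℝ) := by exact_mod_cast hc1
  have hrcR : (1:ℝ) ≤ (r:ℝ) * c := by nlinarith
  have hδval : δR = (n:ℝ) - 2 - (r:ℝ) * c := by rw [hδRdef, hlamRdef]; ring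
  have hnot_n1 : ∀ i : Fin n, hMh.eigenvalues i ≠ (n:ℝ) - 1 := by
    intro i hcon
    have hq := hquad i
    rw [hcon, hδval] at hq
    nlinarith
  have hnot_m1 : ∀ i : Fin n, hMh.eigenvalues i ≠ -1 := by
    intro i hcon
    have hq := hquad i
    rw [hcon, hδval] at hq
    nlinarith
  have hmem : ∀ i, hMh.eigenvalues i = θ ∨ hMh.eigenvalues i = τ := by
    intro i
    obtain ⟨v, hv⟩ := hlift i
    rcases heig v with h | h | h | h
    · rw [hv] at h; exact absurd h (hnot_n1 i)
    · rw [hv] at h; exact Or.inl h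
    · rw [hv] at h; exact absurd h (hnot_m1 i)
    · rw [hv] at h; exact Or.inr h
  -- trace of M
  have htrM : ∑ i, (hMh.eigenvalues i : ℂ) = 0 := by
    have h1 := aux_trace_pow hMh 1
    simp only [pow_one] at h1
    have h2 : M.trace = 0 := by
      have : M.trace = ∑ i, M i i := rfl
      rw [this]
      exact Finset.sum_eq_zero fun i _ => hMdiag i
    rw [h2] at h1
    exact h1.symm
  have htrMR : ∑ i, hMh.eigenvalues i = 0 := by
    have h0 : ((∑ i, hMh.eigenvalues i : ℝ) : ℂ) = 0 := by push_cast; exact htrM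
    exact_mod_cast h0
  have hexθ : ∃ i, hMh.eigenvalues i = θ := by
    by_contra hcon
    push_neg at hcon
    have hall : ∀ i, hMh.eigenvalues i = τ := fun i => (hmem i).resolve_left (hcon i)
    have hsum : ∑ i, hMh.eigenvalues i = n * τ := by
      rw [Finset.sum_congr rfl fun i _ => hall i, Finset.sum_const, Finset.card_univ,
        Fintype.card_fin, nsmul_eq_mul]
    rw [htrMR] at hsum
    nlinarith
  have hexτ : ∃ i, hMh.eigenvalues i = τ := by
    by_contra hcon
    push_neg at hcon
    have hall : ∀ i, hMh.eigenvalues i = θ := fun i => (hmem i).resolve_right (hcon i)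
    have hsum : ∑ i, hMh.eigenvalues i = n * θ := by
      rw [Finset.sum_congr rfl fun i _ => hall i, Finset.sum_const, Finset.card_univ,
        Fintype.card_fin, nsmul_eq_mul]
    rw [htrMR] at hsum
    nlinarith
  obtain ⟨iθ, hiθ⟩ := hexθ
  obtain ⟨iτ, hiτ⟩ := hexτ
  have hθquad : θ^2 = ((n:ℝ) - 2 - (r:ℝ)*c) * θ + ((n:ℝ) - 1) := by
    have h := hquad iθ; rw [hiθ, hδval] at h; exact h
  have hτquad : τ^2 = ((n:ℝ) - 2 - (r:ℝ)*c) * τ + ((n:ℝ) - 1) := by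
    have h := hquad iτ; rw [hiτ, hδval] at h; exact h
  have hθn : θ ≠ (n:ℝ) - 1 := by have h := hnot_n1 iθ; rwa [hiθ] at h
  have hτn : τ ≠ (n:ℝ) - 1 := by have h := hnot_n1 iτ; rwa [hiτ] at h
  have hτm1 : τ ≠ -1 := by have h := hnot_m1 iτ; rwa [hiτ] at h
  have hθm1 : θ ≠ -1 := by intro h; rw [h] at hθpos; linarith
  have hθτ : θ ≠ τ := by intro h; rw [h] at hθpos; linarith
  have hn1m1 : (n:ℝ) - 1 ≠ -1 := by intro h; linarith
  -- traces of powers of A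
  have htrA : ∀ k : ℕ, (A ^ k).trace = ∑ v, hA.eigenvalues v ^ k := by
    intro k
    have h := aux_trace_pow hA k
    simpa [RCLike.ofReal_real_eq_id] using h
  have hcardV : Fintype.card (Fin n × G) = n * r := by
    rw [Fintype.card_prod, Fintype.card_fin, hG]
  -- split of spectral sums of A
  have hsplitA : ∀ F : ℝ → ℝ, ∑ v, F (hA.eigenvalues v) =
      (((univ : Finset (Fin n × G)).filter fun v => hA.eigenvalues v = (n:ℝ)-1).card) * F ((n:ℝ)-1) +
      ((((univ : Finset (Fin n × G)).filter fun v => hA.eigenvalues v = θ).card) * F θ +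
      ((((univ : Finset (Fin n × G)).filter fun v => hA.eigenvalues v = -1).card) * F (-1) +
      (((univ : Finset (Fin n × G)).filter fun v => hA.eigenvalues v = τ).card) * F τ)) := by
    intro F
    have hpt : ∀ v : Fin n × G, F (hA.eigenvalues v) =
        (if hA.eigenvalues v = (n:ℝ)-1 then F ((n:ℝ)-1) else 0) +
        ((if hA.eigenvalues v = θ then F θ else 0) +
        ((if hA.eigenvalues v = -1 then F (-1) else 0) +
        (if hA.eigenvalues v = τ then F τ else 0))) := by
      intro v
      rcases heig v with h | h | h | h
      · rw [h, if_pos rfl, if_neg (Ne.symm hθn), if_neg hn1m1, if_neg (Ne.symm hτn)]; ring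
      · rw [h, if_neg hθn, if_pos rfl, if_neg hθm1, if_neg hθτ]; ring
      · rw [h, if_neg (fun hh => hn1m1 hh.symm), if_neg (fun hh => hθm1 hh.symm), if_pos rfl,
          if_neg (fun hh => hτm1 hh.symm)]; ring
      · rw [h, if_neg hτn, if_neg (fun hh => hθτ hh.symm), if_neg hτm1, if_pos rfl]; ring
    rw [Finset.sum_congr rfl fun v _ => hpt v,
      Finset.sum_add_distrib, Finset.sum_add_distrib, Finset.sum_add_distrib,
      ← Finset.sum_filter, ← Finset.sum_filter, ← Finset.sum_filter, ← Finset.sum_filter,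
      Finset.sum_const, Finset.sum_const, Finset.sum_const, Finset.sum_const]
    simp only [nsmul_eq_mul]
  set aC := ((univ : Finset (Fin n × G)).filter fun v => hA.eigenvalues v = (n:ℝ)-1).card with haCdef
  set mθC := ((univ : Finset (Fin n × G)).filter fun v => hA.eigenvalues v = θ).card with hmθCdef
  set bC := ((univ : Finset (Fin n × G)).filter fun v => hA.eigenvalues v = -1).card with hbCdef
  set mτC := ((univ : Finset (Fin n × G)).filter fun v => hA.eigenvalues v = τ).card with hmτCdef
  have hmθC : mθC = mθ := by
    rw [← hmθ, Nat.card_eq_fintype_card, Fintype.card_subtype, hmθCdef]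
  have hmτC : mτC = mτ := by
    rw [← hmτ, Nat.card_eq_fintype_card, Fintype.card_subtype, hmτCdef]
  have E0 : (aC:ℝ) + ((mθC:ℝ) + ((bC:ℝ) + (mτC:ℝ))) = (n:ℝ) * r := by
    have h := hsplitA (fun _ => (1:ℝ))
    simp only [mul_one] at h
    rw [Finset.sum_const, Finset.card_univ, hcardV, nsmul_eq_mul, mul_one] at h
    push_cast at h
    linarith
  have E1 : (aC:ℝ)*((n:ℝ)-1) + (mθC:ℝ)*θ + (bC:ℝ)*(-1) + (mτC:ℝ)*τ = 0 := by
    have h := hsplitA id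
    simp only [id_eq] at h
    have h2 := htrA 1
    simp only [pow_one] at h2
    have h3 : A.trace = 0 := by rw [hAdef]; simp
    rw [h3] at h2
    rw [← h2] at h
    linarith
  have E2 : (aC:ℝ)*((n:ℝ)-1)^2 + (mθC:ℝ)*θ^2 + (bC:ℝ) + (mτC:ℝ)*τ^2 = (n:ℝ)*r*((n:ℝ)-1) := by
    have h := hsplitA (fun x => x^2)
    beta_reduce at h
    have h2 := htrA 2
    have h3 : (A^2).trace = (n:ℝ)*r*((n:ℝ)-1) := by
      rw [pow_two, htrace_eq]
      have hdd : ∀ p : Fin n × G, (A*A) p p = ((n:ℝ)-1) := by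
        intro p
        have h4 : (X.adjMatrix ℝ * X.adjMatrix ℝ) p p = (X.degree p : ℝ) := by
          exact_mod_cast X.adjMatrix_mul_self_apply_self p
        rw [hAdef, h4, hdeg p]
        push_cast [Nat.cast_sub (by omega : 1 ≤ n)]
        ring
      rw [Finset.sum_congr rfl fun p _ => hdd p, Finset.sum_const, Finset.card_univ, hcardV,
        nsmul_eq_mul]
      push_cast
      ring
    rw [h3] at h2
    rw [← h2] at h
    nlinarith [h]
  have E3 : (aC:ℝ)*((n:ℝ)-1)^3 + (mθC:ℝ)*θ^3 + (bC:ℝ)*(-1) + (mτC:ℝ)*τ^3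
      = (n:ℝ)*r*((n:ℝ)-1)*((n:ℝ) - 2 - ((r:ℝ)-1)*c) := by
    have h := hsplitA (fun x => x^3)
    beta_reduce at h
    have h2 := htrA 3
    have h3 : (A^3).trace = (n:ℝ)*r*((n:ℝ)-1)*((n:ℝ) - 2 - ((r:ℝ)-1)*c) := by
      rw [htrace_eq]
      have hdiag3 : ∀ p : Fin n × G, (A^3) p p = ((n:ℝ)-1)*lamR := by
        rintro ⟨u, a⟩
        have hpow : (A^3 : Matrix (Fin n × G) (Fin n × G) ℝ) = A * (A * A) := by
          rw [pow_succ', pow_two]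
        rw [hpow, hAdef, SimpleGraph.adjMatrix_mul_apply, hnbr u a,
          Finset.sum_image (fun v hv w hw h => hinj u a h)]
        have hterm : ∀ v ∈ (univ : Finset (Fin n)).erase u,
            (X.adjMatrix ℝ * X.adjMatrix ℝ) ((v, a * f u v) : Fin n × G) (u, a) = lamR := by
          intro v hv
          have hvu : v ≠ u := (Finset.mem_erase.mp hv).1
          have hswap : ((u, a) : Fin n × G) = (u, (a * f u v) * f v u) := by
            rw [hsym, mul_assoc, inv_mul_cancel, mul_one]
          have h5 : (X.adjMatrix ℝ * X.adjMatrix ℝ) ((v, a * f u v) : Fin n × G)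
              (u, (a * f u v) * f v u) = (Nw v u (f v u) : ℝ) := by
            rw [← hAdef]
            exact hA2' v u (a * f u v) (f v u) hvu
          rw [hswap, h5, hlamR v u hvu]
        rw [Finset.sum_congr rfl hterm, Finset.sum_const,
          Finset.card_erase_of_mem (Finset.mem_univ u), Finset.card_univ, Fintype.card_fin,
          nsmul_eq_mul]
        push_cast [Nat.cast_sub (by omega : 1 ≤ n)]
        ring
      rw [Finset.sum_congr rfl fun p _ => hdiag3 p, Finset.sum_const, Finset.card_univ, hcardV,
        nsmul_eq_mul, hlamRdef]
      push_cast
      ring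
    rw [h3] at h2
    rw [← h2] at h
    nlinarith [h]
  -- solve for the multiplicities
  have hS1 : (mθC:ℝ)*θ + (mτC:ℝ)*τ = 0 := by
    have hkey : ((r:ℝ)*c) * ((mθC:ℝ)*θ + (mτC:ℝ)*τ) = 0 := by
      linear_combination (-1:ℝ)*E2 + (mθC:ℝ)*hθquad + (mτC:ℝ)*hτquad + ((n:ℝ)-2)*E1
        + ((n:ℝ)-1)*E0
    have hrc0 : (r:ℝ)*c ≠ 0 := by intro h; rw [h] at hrcR; linarith
    exact (mul_eq_zero.mp hkey).resolve_left hrc0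
  have hxy2 : (mθC:ℝ)*θ^2 + (mτC:ℝ)*τ^2 = ((n:ℝ)-1)*((mθC:ℝ) + (mτC:ℝ)) := by
    linear_combination (mθC:ℝ)*hθquad + (mτC:ℝ)*hτquad + ((n:ℝ)-2-(r:ℝ)*c)*hS1
  have hxy3 : (mθC:ℝ)*θ^3 + (mτC:ℝ)*τ^3
      = ((n:ℝ)-2-(r:ℝ)*c)*((n:ℝ)-1)*((mθC:ℝ) + (mτC:ℝ)) := by
    linear_combination ((mθC:ℝ)*θ)*hθquad + ((mτC:ℝ)*τ)*hτquad
      + ((n:ℝ)-2-(r:ℝ)*c)*hxy2 + ((n:ℝ)-1)*hS1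
  have hb2 : (bC:ℝ) = (aC:ℝ)*((n:ℝ)-1) := by
    linear_combination (-1:ℝ)*E1 + hS1
  have hxy0 : (mθC:ℝ) + (mτC:ℝ) = (n:ℝ)*r - (aC:ℝ)*n := by
    linear_combination E0 - hb2
  have haC1 : (aC:ℝ) = 1 := by
    have hkey : (n:ℝ)*((n:ℝ)-1)*((r:ℝ)*c)*((aC:ℝ)-1) = 0 := by
      linear_combination E3 - hxy3 + hb2 - ((n:ℝ)-2-(r:ℝ)*c)*((n:ℝ)-1)*hxy0
    have hpos : (0:ℝ) < (n:ℝ)*((n:ℝ)-1)*((r:ℝ)*c) := by nlinarith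
    have := (mul_eq_zero.mp hkey).resolve_left (ne_of_gt hpos)
    linarith
  have hxy0' : (mθC:ℝ) + (mτC:ℝ) = (n:ℝ)*r - n := by rw [haC1] at hxy0; linarith
  -- M side counts
  have hsplitM : ∀ F : ℝ → ℝ, ∑ i, F (hMh.eigenvalues i) =
      (((univ : Finset (Fin n)).filter fun i => hMh.eigenvalues i = θ).card) * F θ +
      (((univ : Finset (Fin n)).filter fun i => hMh.eigenvalues i = τ).card) * F τ := by
    intro F
    have hpt : ∀ i, F (hMh.eigenvalues i) =
        (if hMh.eigenvalues i = θ then F θ else 0) +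
        (if hMh.eigenvalues i = τ then F τ else 0) := by
      intro i
      rcases hmem i with h | h
      · rw [h, if_pos rfl, if_neg hθτ]; ring
      · rw [h, if_neg (fun hh => hθτ hh.symm), if_pos rfl]; ring
    rw [Finset.sum_congr rfl fun i _ => hpt i, Finset.sum_add_distrib,
      ← Finset.sum_filter, ← Finset.sum_filter, Finset.sum_const, Finset.sum_const]
    simp only [nsmul_eq_mul]
  set kθC := ((univ : Finset (Fin n)).filter fun i => hMh.eigenvalues i = θ).card with hkθdef
  set kτC := ((univ : Finset (Fin n)).filter fun i => hMh.eigenvalues i = τ).card with hkτdef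
  have hkn : (kθC:ℝ) + (kτC:ℝ) = n := by
    have h := hsplitM (fun _ => (1:ℝ))
    simp only [mul_one] at h
    rw [Finset.sum_const, Finset.card_univ, Fintype.card_fin, nsmul_eq_mul, mul_one] at h
    push_cast at h
    linarith
  have hktr : (kθC:ℝ)*θ + (kτC:ℝ)*τ = 0 := by
    have h := hsplitM id
    simp only [id_eq] at h
    rw [htrMR] at h
    linarith
  -- final real identities
  have hfinθ : (mθC:ℝ) = ((r:ℝ)-1) * kθC := by
    have hsub : θ - τ ≠ 0 := sub_ne_zero.mpr hθτ
    apply mul_right_cancel₀ hsub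
    linear_combination hS1 - τ*hxy0' - ((r:ℝ)-1)*hktr + ((r:ℝ)-1)*τ*hkn
  have hfinτ : (mτC:ℝ) = ((r:ℝ)-1) * kτC := by
    have hsub : θ - τ ≠ 0 := sub_ne_zero.mpr hθτ
    apply mul_right_cancel₀ hsub
    linear_combination (-1:ℝ)*hS1 + θ*hxy0' + ((r:ℝ)-1)*hktr - ((r:ℝ)-1)*θ*hkn
  have hmθfinal : mθ = (r - 1) * kθC := by
    have hcast : ((mθ:ℕ) : ℝ) = (((r - 1) * kθC : ℕ) : ℝ) := by
      rw [← hmθC]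
      push_cast [Nat.cast_sub (by omega : 1 ≤ r)]
      rw [hfinθ]
    exact_mod_cast hcast
  have hmτfinal : mτ = (r - 1) * kτC := by
    have hcast : ((mτ:ℕ) : ℝ) = (((r - 1) * kτC : ℕ) : ℝ) := by
      rw [← hmτC]
      push_cast [Nat.cast_sub (by omega : 1 ≤ r)]
      rw [hfinτ]
    exact_mod_cast hcast
  refine ⟨hMh, hMdiag, habs1, hmem, ⟨iθ, hiθ⟩, ⟨iτ, hiτ⟩, kθC, kτC, hmθfinal, hmτfinal, ?_, ?_⟩
  · rw [Nat.card_eq_fintype_card, Fintype.card_subtype, hkθdef]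
  · rw [Nat.card_eq_fintype_card, Fintype.card_subtype, hkτdef]
end

section
/- Let p be a prime, V and U vector spaces over GF(p) of dimensions m and s, and B: V×V → U a GF(p)-bilinear alternating form such that for each nonzero a ∈ V the map v ↦ B(a,v) is surjective onto U. Define a graph X(B) on vertex set V×U by (v,a) ~ (w,b) iff (v,a) ≠ (w,b) and B(v,w) = a − b. Then X(B) is an antipodal distance-regular p^s-fold cover of K_{p^m} in which any two vertices at distance 2 have exactly p^{m−s} common neighbours. -/
/-- The fibre of a surjective linear map over finite `ZMod p`-modules has
`p ^ (dim V - dim U)` elements. -/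
lemma aux_fiber_card {p : ℕ} [Fact p.Prime] {V U : Type*}
    [AddCommGroup V] [Module (ZMod p) V] [Fintype V]
    [AddCommGroup U] [Module (ZMod p) U] [Fintype U]
    (L : V →ₗ[ZMod p] U) (hL : Function.Surjective L) (t : U) :
    Nat.card {x : V // L x = t} =
      p ^ (Module.finrank (ZMod p) V - Module.finrank (ZMod p) U) := by
  classical
  obtain ⟨x0, hx0⟩ := hL t
  have e : {x : V // L x = t} ≃ LinearMap.ker L :=
    { toFun := fun x => ⟨x.1 - x0, by
        rw [LinearMap.mem_ker, map_sub, x.2, hx0, sub_self]⟩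
      invFun := fun k => ⟨k.1 + x0, by
        have hk := k.2
        rw [LinearMap.mem_ker] at hk
        rw [map_add, hk, hx0, zero_add]⟩
      left_inv := fun x => by ext; simp
      right_inv := fun k => by ext; simp }
  have hker : Module.finrank (ZMod p) (LinearMap.ker L) =
      Module.finrank (ZMod p) V - Module.finrank (ZMod p) U := by
    have h1 := LinearMap.finrank_range_add_finrank_ker L
    have h2 : LinearMap.range L = ⊤ := LinearMap.range_eq_top.2 hL
    rw [h2, finrank_top] at h1
    omega
  rw [Nat.card_congr e, Nat.card_eq_fintype_card,
    Module.card_eq_pow_finrank (K := ZMod p), ZMod.card, hker]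

/-- **Symplectic (Thas–Somma) covers.** Let `p` be a prime, `V`, `U` vector
spaces over `GF(p)` of dimensions `m`, `s`, and `B : V × V → U` a bilinear
alternating form such that `B(a, ·)` is surjective for each `a ≠ 0`.  The graph
`X(B)` on `V × U`, with `(v,a) ~ (w,b)` iff `(v,a) ≠ (w,b)` and
`B(v,w) = a - b`, is a distance-regular antipodal `p^s`-fold cover of
`K_{p^m}` (fibres `{v} × U`) in which any two vertices at distance `2` have
exactly `p^(m-s)` common neighbours. -/
theorem symplectic_cover_is_drackn (p : ℕ) [Fact p.Prime] (m s : ℕ)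
    (hs : 1 ≤ s) (hms : s ≤ m)
    (V U : Type*) [AddCommGroup V] [Module (ZMod p) V] [Fintype V]
    [AddCommGroup U] [Module (ZMod p) U] [Fintype U]
    (hV : Module.finrank (ZMod p) V = m) (hU : Module.finrank (ZMod p) U = s)
    (B : V →ₗ[ZMod p] V →ₗ[ZMod p] U)
    (halt : ∀ v, B v v = 0)
    (hsurj : ∀ a : V, a ≠ 0 → Function.Surjective (B a)) :
    Fintype.card V = p ^ m ∧
    IsDracknCover
      (SimpleGraph.fromRel fun x y : V × U => B x.1 y.1 = x.2 - y.2)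
      Prod.fst (p ^ s) (p ^ (m - s)) := by
  classical
  have hp2 : 2 ≤ p := (Fact.out : p.Prime).two_le
  have hcardV : Fintype.card V = p ^ m := by
    rw [Module.card_eq_pow_finrank (K := ZMod p), ZMod.card, hV]
  have hcardU : Nat.card U = p ^ s := by
    rw [Nat.card_eq_fintype_card, Module.card_eq_pow_finrank (K := ZMod p), ZMod.card, hU]
  set G := SimpleGraph.fromRel fun x y : V × U => B x.1 y.1 = x.2 - y.2 with hG
  -- the form is skew-symmetric
  have skew : ∀ v w : V, B w v = - B v w := by
    intro v w
    have h := halt (v + w)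
    simp only [map_add, LinearMap.add_apply, halt, zero_add, add_zero] at h
    rw [eq_neg_iff_add_eq_zero]
    exact h
  -- adjacency characterization
  have adj_iff : ∀ x y : V × U, G.Adj x y ↔ x.1 ≠ y.1 ∧ B x.1 y.1 = x.2 - y.2 := by
    intro x y
    rw [hG, SimpleGraph.fromRel_adj]
    constructor
    · rintro ⟨hne, h | h⟩
      · refine ⟨fun hfst => hne ?_, h⟩
        rw [hfst, halt, eq_comm, sub_eq_zero] at h
        exact Prod.ext hfst h
      · have h' : B x.1 y.1 = x.2 - y.2 := by
          rw [skew x.1 y.1, neg_eq_iff_eq_neg, neg_sub] at h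
          exact h
        refine ⟨fun hfst => hne ?_, h'⟩
        rw [hfst, halt, eq_comm, sub_eq_zero] at h'
        exact Prod.ext hfst h'
    · rintro ⟨hfst, h⟩
      exact ⟨fun he => hfst (congrArg Prod.fst he), Or.inl h⟩
  -- common neighbours solve a linear equation
  have common : ∀ u w x : V × U, G.Adj u x → G.Adj w x →
      B (u.1 - w.1) x.1 = u.2 - w.2 := by
    intro u w x h1 h2
    rw [adj_iff] at h1 h2
    rw [map_sub, LinearMap.sub_apply, h1.2, h2.2]
    abel
  -- no two vertices in the same fibre have a common neighbour
  have nocommon : ∀ u w : V × U, u ≠ w → u.1 = w.1 →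
      ∀ x, ¬(G.Adj u x ∧ G.Adj w x) := by
    rintro u w hne hfst x ⟨h1, h2⟩
    have h := common u w x h1 h2
    rw [hfst, sub_self, map_zero, LinearMap.zero_apply, eq_comm, sub_eq_zero] at h
    exact hne (Prod.ext hfst h)
  -- vertices in the same fibre are not adjacent
  have nadj_fib : ∀ u w : V × U, u.1 = w.1 → ¬ G.Adj u w := by
    intro u w hfst h
    exact ((adj_iff u w).1 h).1 hfst
  -- extraction of midpoints of distance-2 pairs
  have exists_mid : ∀ u w : V × U, G.dist u w = 2 →
      ∃ x, G.Adj u x ∧ G.Adj x w := by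
    intro u w h
    obtain ⟨W, hW⟩ := SimpleGraph.exists_walk_of_dist_ne_zero
      (by omega : G.dist u w ≠ 0)
    rw [h] at hW
    cases W with
    | nil => simp at hW
    | cons h1 W' =>
      cases W' with
      | nil => simp at hW
      | cons h2 W'' =>
        have h0 : W''.length = 0 := by
          simp only [SimpleGraph.Walk.length_cons] at hW; omega
        have hxw := SimpleGraph.Walk.eq_of_length_eq_zero h0
        subst hxw
        exact ⟨_, h1, h2⟩
  refine ⟨hcardV, ?_, ?_, ?_, ?_, ?_⟩
  · -- fibre sizes
    intro i
    have e : {v : V × U // v.1 = i} ≃ U :=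
      { toFun := fun v => v.1.2
        invFun := fun b => ⟨(i, b), rfl⟩
        left_inv := fun v => Subtype.ext (Prod.ext v.2.symm rfl)
        right_inv := fun b => rfl }
    rw [Nat.card_congr e, hcardU]
  · -- adjacency implies different fibres
    intro u w h
    exact ((adj_iff u w).1 h).1
  · -- unique neighbour in each other fibre
    intro u i hne
    refine ⟨(i, u.2 - B u.1 i), ⟨rfl, (adj_iff _ _).2 ⟨hne, (sub_sub_cancel _ _).symm⟩⟩, ?_⟩
    rintro y ⟨hy1, hy2⟩
    rw [adj_iff] at hy2
    have h2 : y.2 = u.2 - B u.1 i := by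
      have hthis := hy2.2
      rw [hy1] at hthis
      rw [eq_sub_iff_add_eq, hthis]
      abel
    exact Prod.ext hy1 h2
  · -- antipodality : same fibre ↔ distance 3
    intro u w hne
    constructor
    · intro hfst
      have hne2 : u.2 ≠ w.2 := fun h2 => hne (Prod.ext hfst h2)
      have hntV : Nontrivial V := by
        apply Fintype.one_lt_card_iff_nontrivial.1
        rw [hcardV]
        calc 1 < 2 := one_lt_two
        _ ≤ p := hp2
        _ ≤ p ^ m := Nat.le_self_pow (by omega) p
      obtain ⟨x, hx⟩ := exists_ne u.1
      have hux : u.1 - x ≠ 0 := sub_ne_zero.2 (Ne.symm hx)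
      obtain ⟨y, hy⟩ := hsurj (u.1 - x) hux (w.2 - (u.2 - B u.1 x))
      have hyBne : B u.1 x ≠ w.2 - (u.2 - B u.1 x) := by
        intro h
        apply hne2
        have h2 : (0 : U) + B u.1 x = w.2 - u.2 + B u.1 x := by
          rw [zero_add]
          conv_lhs => rw [h]
          abel
        have h3 : (w.2 - u.2 : U) = 0 := (add_right_cancel h2).symm
        exact (sub_eq_zero.1 h3).symm
      have hyu : y ≠ u.1 := by
        intro h
        apply hyBne
        rw [← hy, h, map_sub, LinearMap.sub_apply, halt, skew x u.1]
        abel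
      have hyx : y ≠ x := by
        intro h
        apply hyBne
        rw [← hy, h, map_sub, LinearMap.sub_apply, halt]
        abel
      have ha1 : G.Adj u (x, u.2 - B u.1 x) :=
        (adj_iff _ _).2 ⟨Ne.symm hx, (sub_sub_cancel _ _).symm⟩
      have ha2 : G.Adj (x, u.2 - B u.1 x) (y, u.2 - B u.1 x - B x y) :=
        (adj_iff _ _).2 ⟨Ne.symm hyx, (sub_sub_cancel _ _).symm⟩
      have ha3 : G.Adj (y, u.2 - B u.1 x - B x y) w := by
        refine (adj_iff _ _).2 ⟨by rw [← hfst]; exact hyu, ?_⟩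
        have hBy : B u.1 y - B x y = w.2 - (u.2 - B u.1 x) := by
          rw [← LinearMap.sub_apply, ← map_sub]; exact hy
        have h4 : B u.1 y = w.2 - (u.2 - B u.1 x) + B x y := by
          rw [← hBy]; abel
        show B y w.1 = u.2 - B u.1 x - B x y - w.2
        rw [← hfst, skew u.1 y, h4]
        abel
      have hle : G.dist u w ≤ 3 := by
        have := SimpleGraph.dist_le (SimpleGraph.Walk.cons ha1
          (SimpleGraph.Walk.cons ha2 (SimpleGraph.Walk.cons ha3 SimpleGraph.Walk.nil)))
        simpa using this
      have h0 : G.dist u w ≠ 0 := by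
        rw [SimpleGraph.dist_ne_zero_iff_ne_and_reachable]
        exact ⟨hne, (SimpleGraph.Walk.cons ha1 (SimpleGraph.Walk.cons ha2
          (SimpleGraph.Walk.cons ha3 SimpleGraph.Walk.nil))).reachable⟩
      have h1 : G.dist u w ≠ 1 := by
        rw [Ne, SimpleGraph.dist_eq_one_iff_adj]
        exact nadj_fib u w hfst
      have h2 : G.dist u w ≠ 2 := by
        intro h
        obtain ⟨x', hx1, hx2⟩ := exists_mid u w h
        exact nocommon u w hne hfst x' ⟨hx1, hx2.symm⟩
      omega
    · intro hdist
      by_contra hfst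
      by_cases hadj : G.Adj u w
      · rw [← SimpleGraph.dist_eq_one_iff_adj] at hadj
        omega
      · have hBne : B u.1 w.1 ≠ u.2 - w.2 := by
          intro h
          exact hadj ((adj_iff u w).2 ⟨hfst, h⟩)
        have hsub : u.1 - w.1 ≠ 0 := sub_ne_zero.2 hfst
        obtain ⟨x, hx⟩ := hsurj (u.1 - w.1) hsub (u.2 - w.2)
        have hxu : x ≠ u.1 := by
          intro h
          apply hBne
          rw [← hx, h, map_sub, LinearMap.sub_apply, halt, skew w.1 u.1]
          abel
        have hxw : x ≠ w.1 := by
          intro h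
          apply hBne
          rw [← hx, h, map_sub, LinearMap.sub_apply, halt]
          abel
        have ha1 : G.Adj u (x, u.2 - B u.1 x) :=
          (adj_iff _ _).2 ⟨Ne.symm hxu, (sub_sub_cancel _ _).symm⟩
        have ha2 : G.Adj (x, u.2 - B u.1 x) w := by
          refine (adj_iff _ _).2 ⟨hxw, ?_⟩
          have hBx : B u.1 x - B w.1 x = u.2 - w.2 := by
            rw [← LinearMap.sub_apply, ← map_sub]; exact hx
          have h4 : B w.1 x = B u.1 x - (u.2 - w.2) := by rw [← hBx]; abel
          show B x w.1 = u.2 - B u.1 x - w.2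
          rw [skew w.1 x, h4]
          abel
        have hle : G.dist u w ≤ 2 := by
          have := SimpleGraph.dist_le (SimpleGraph.Walk.cons ha1
            (SimpleGraph.Walk.cons ha2 SimpleGraph.Walk.nil))
          simpa using this
        omega
  · -- distance-2 pairs have p^(m-s) common neighbours
    intro u w hd
    obtain ⟨x0, hx01, hx02⟩ := exists_mid u w hd
    have hne : u ≠ w := by
      intro h
      rw [h, SimpleGraph.dist_self] at hd
      omega
    have hfst : u.1 ≠ w.1 := by
      intro hfst
      exact nocommon u w hne hfst x0 ⟨hx01, hx02.symm⟩
    have hnadj : ¬ G.Adj u w := by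
      intro h
      rw [← SimpleGraph.dist_eq_one_iff_adj] at h
      omega
    have hBne : B u.1 w.1 ≠ u.2 - w.2 := by
      intro h
      exact hnadj ((adj_iff u w).2 ⟨hfst, h⟩)
    have hsub : u.1 - w.1 ≠ 0 := sub_ne_zero.2 hfst
    have e : {y : V × U // G.Adj u y ∧ G.Adj w y} ≃
        {x : V // B (u.1 - w.1) x = u.2 - w.2} :=
      { toFun := fun y => ⟨y.1.1, common u w y.1 y.2.1 y.2.2⟩
        invFun := fun y => ⟨(y.1, u.2 - B u.1 y.1), by
          obtain ⟨x, hx⟩ := y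
          dsimp only
          have hxu : u.1 ≠ x := by
            intro h
            apply hBne
            rw [← hx, ← h, map_sub, LinearMap.sub_apply, halt, skew w.1 u.1]
            abel
          have hxw : w.1 ≠ x := by
            intro h
            apply hBne
            rw [← hx, ← h, map_sub, LinearMap.sub_apply, halt]
            abel
          have hBx : B u.1 x - B w.1 x = u.2 - w.2 := by
            rw [← LinearMap.sub_apply, ← map_sub]; exact hx
          have h4 : B w.1 x = B u.1 x - (u.2 - w.2) := by rw [← hBx]; abel
          exact ⟨(adj_iff _ _).2 ⟨hxu, (sub_sub_cancel _ _).symm⟩,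
            (adj_iff _ _).2 ⟨hxw, by rw [h4, sub_sub_eq_add_sub, sub_sub_eq_add_sub, add_comm]⟩⟩⟩
        left_inv := fun y => by
          have h1 := ((adj_iff u y.1).1 y.2.1).2
          refine Subtype.ext (Prod.ext rfl ?_)
          show u.2 - B u.1 y.1.1 = y.1.2
          rw [h1]
          exact sub_sub_cancel _ _
        right_inv := fun x => rfl }
    rw [Nat.card_congr e, aux_fiber_card (B (u.1 - w.1)) (hsurj _ hsub) _, hV, hU]
end

section
/- Let n ≥ 2 and let τ < 0 satisfy the drackn eigenvalue equation. Then the quantity m̄_τ := n/(1 + τ²/(n−1)) is strictly decreasing in |τ|, and m̄_τ ≥ √n if and only if |τ| ≤ (√n − 1)√(√n + 1). Consequently, if an abelian (n,r,c)-drackn with r odd exists (forcing n ≤ m̄_τ² by the complex absolute bound applied to the n lines in dimension m̄_τ), then −(√n − 1)√(√n + 1) ≤ τ. -/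
/-- **The bound on `τ` from the complex absolute bound.** For `n ≥ 2`, the
quantity `m̄_τ = n/(1 + τ²/(n-1))` is strictly decreasing in `|τ|`, and
`m̄_τ ≥ √n` iff `|τ| ≤ (√n - 1)√(√n + 1)`.  Consequently, if an abelian
`(n,r,c)`-drackn with `r` odd exists — forcing `n ≤ m̄_τ²` by the complex
absolute bound applied to the `n` lines in dimension `m̄_τ` — then
`-(√n - 1)√(√n + 1) ≤ τ`. -/
theorem tau_bound_from_absolute_bound (n : ℕ) (hn : 2 ≤ n) :
    (∀ τ₁ τ₂ : ℝ, |τ₁| < |τ₂| →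
      (n : ℝ) / (1 + τ₂ ^ 2 / ((n : ℝ) - 1)) <
        (n : ℝ) / (1 + τ₁ ^ 2 / ((n : ℝ) - 1))) ∧
    (∀ τ : ℝ,
      Real.sqrt n ≤ (n : ℝ) / (1 + τ ^ 2 / ((n : ℝ) - 1)) ↔
        |τ| ≤ (Real.sqrt n - 1) * Real.sqrt (Real.sqrt n + 1)) ∧
    (∀ τ : ℝ, τ < 0 →
      (n : ℝ) ≤ ((n : ℝ) / (1 + τ ^ 2 / ((n : ℝ) - 1))) ^ 2 →
      -((Real.sqrt n - 1) * Real.sqrt (Real.sqrt n + 1)) ≤ τ) := by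
  have hN : (2:ℝ) ≤ (n:ℝ) := by exact_mod_cast hn
  have hN1 : (0:ℝ) < (n:ℝ) - 1 := by linarith
  have hNpos : (0:ℝ) < (n:ℝ) := by linarith
  have hs : Real.sqrt n * Real.sqrt n = (n:ℝ) :=
    Real.mul_self_sqrt (by positivity)
  have hsnn : 0 ≤ Real.sqrt n := Real.sqrt_nonneg _
  have hs1 : 1 ≤ Real.sqrt n := by nlinarith
  have hB0 : 0 ≤ (Real.sqrt n - 1) * Real.sqrt (Real.sqrt n + 1) := by
    have := Real.sqrt_nonneg (Real.sqrt n + 1)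
    nlinarith
  have hB2 : ((Real.sqrt n - 1) * Real.sqrt (Real.sqrt n + 1)) ^ 2
      = (Real.sqrt n - 1) * ((n:ℝ) - 1) := by
    have h1 : Real.sqrt (Real.sqrt n + 1) ^ 2 = Real.sqrt n + 1 :=
      Real.sq_sqrt (by positivity)
    rw [mul_pow, h1]
    linear_combination (Real.sqrt n - 1) * hs
  have key : ∀ τ : ℝ, (Real.sqrt n ≤ (n : ℝ) / (1 + τ ^ 2 / ((n : ℝ) - 1)) ↔
      τ ^ 2 ≤ (Real.sqrt n - 1) * ((n:ℝ) - 1)) := by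
    intro τ
    have Dpos : (0:ℝ) < 1 + τ ^ 2 / ((n : ℝ) - 1) := by positivity
    have hu : τ ^ 2 = τ ^ 2 / ((n : ℝ) - 1) * ((n:ℝ) - 1) :=
      (div_mul_cancel₀ _ hN1.ne').symm
    have hunn : 0 ≤ τ ^ 2 / ((n : ℝ) - 1) := by positivity
    rw [le_div_iff₀ Dpos]
    constructor
    · intro h
      nlinarith [hu, hs, mul_le_mul_of_nonneg_right h hN1.le]
    · intro h
      nlinarith [hu, hs, mul_le_mul_of_nonneg_left
        (show τ ^ 2 / ((n : ℝ) - 1) ≤ Real.sqrt n - 1 by nlinarith) hsnn]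
  have iff2 : ∀ τ : ℝ,
      Real.sqrt n ≤ (n : ℝ) / (1 + τ ^ 2 / ((n : ℝ) - 1)) ↔
        |τ| ≤ (Real.sqrt n - 1) * Real.sqrt (Real.sqrt n + 1) := by
    intro τ
    rw [key τ, ← hB2]
    constructor
    · intro h
      nlinarith [sq_abs τ, abs_nonneg τ, sq_nonneg (|τ| - (Real.sqrt n - 1) * Real.sqrt (Real.sqrt n + 1))]
    · intro h
      nlinarith [sq_abs τ, abs_nonneg τ]
  refine ⟨?_, iff2, ?_⟩
  · intro τ₁ τ₂ h
    have h2 : τ₁ ^ 2 < τ₂ ^ 2 := by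
      have := sq_abs τ₁; have := sq_abs τ₂
      nlinarith [abs_nonneg τ₁]
    have D1pos : (0:ℝ) < 1 + τ₁ ^ 2 / ((n : ℝ) - 1) := by positivity
    have hlt : 1 + τ₁ ^ 2 / ((n : ℝ) - 1) < 1 + τ₂ ^ 2 / ((n : ℝ) - 1) := by
      gcongr
    exact div_lt_div_of_pos_left hNpos D1pos hlt
  · intro τ hτ h
    have Dpos : (0:ℝ) < 1 + τ ^ 2 / ((n : ℝ) - 1) := by positivity
    have hm : 0 ≤ (n : ℝ) / (1 + τ ^ 2 / ((n : ℝ) - 1)) := by positivity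
    have hsm : Real.sqrt n ≤ (n : ℝ) / (1 + τ ^ 2 / ((n : ℝ) - 1)) := by
      have := Real.sqrt_le_sqrt h
      rwa [Real.sqrt_sq hm] at this
    have := (iff2 τ).mp hsm
    rw [abs_of_neg hτ] at this
    linarith
end
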